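/- arXiv:math/0609788 — 7 statements merged into one kernel-verified Lean document; each statement's English description precedes it below -/
import Mathlib

section
/- For every permutation class Y (containing the permutation 1) and every permutation π, the shortest Y-deflation of π is unique. -/
/-- Pattern involvement: `σ` occurs as a pattern in `π`. -/
def Involves {k n : ℕ} (σ : Equiv.Perm (Fin k)) (π : Equiv.Perm (Fin n)) : Prop :=
  ∃ f : Fin k → Fin n, StrictMono f ∧ ∀ a b : Fin k, σ a < σ b ↔ π (f a) < π (f b)

/-- Finite permutations of arbitrary length. -/
abbrev PermS := Σ n : ℕ, Equiv.Perm (Fin n)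

/-- Pattern involvement on permutations of arbitrary length. -/
def SInvolves (s t : PermS) : Prop := Involves s.2 t.2

/-- A permutation class: a set of permutations closed downwards under involvement. -/
def IsPermClass (X : Set PermS) : Prop :=
  ∀ s t : PermS, SInvolves s t → t ∈ X → s ∈ X

/-- A set of positions is consecutive (order-convex). -/
def Consec {n : ℕ} (s : Finset (Fin n)) : Prop :=
  ∀ ⦃a b c : Fin n⦄, a ∈ s → c ∈ s → a ≤ b → b ≤ c → b ∈ s

/-- An interval (block) of a permutation: consecutive positions with consecutive values. -/
def IsInterval {n : ℕ} (π : Equiv.Perm (Fin n)) (s : Finset (Fin n)) : Prop :=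
  Consec s ∧ Consec (s.image π)

/-- `α` is the pattern of `π` on the set of positions `s`. -/
def IsPatternOf {k n : ℕ} (α : Equiv.Perm (Fin k)) (π : Equiv.Perm (Fin n))
    (s : Finset (Fin n)) : Prop :=
  ∃ f : Fin k → Fin n, StrictMono f ∧ (∀ i, f i ∈ s) ∧ (∀ x ∈ s, ∃ i, f i = x) ∧
    ∀ a b : Fin k, α a < α b ↔ π (f a) < π (f b)

/-- `π` is the inflation of `σ` with the given (nonempty, interval) blocks. -/
def IsInflation {n m : ℕ} (π : Equiv.Perm (Fin n)) (σ : Equiv.Perm (Fin m))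
    (blocks : Fin m → Finset (Fin n)) : Prop :=
  (∀ i, (blocks i).Nonempty) ∧
  (∀ i, IsInterval π (blocks i)) ∧
  (∀ x : Fin n, ∃! i, x ∈ blocks i) ∧
  (∀ i j : Fin m, i < j → ∀ x ∈ blocks i, ∀ y ∈ blocks j, x < y) ∧
  (∀ i j : Fin m, i ≠ j → ∀ x ∈ blocks i, ∀ y ∈ blocks j, (σ i < σ j ↔ π x < π y))

/-- `π'` is a `Y`-deflation of `π`: `π = π'[α₁,…,α_k]` with all `αᵢ ∈ Y`. -/
def IsYDeflation (Y : Set PermS) {m n : ℕ} (π' : Equiv.Perm (Fin m))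
    (π : Equiv.Perm (Fin n)) : Prop :=
  ∃ blocks : Fin m → Finset (Fin n), IsInflation π π' blocks ∧
    ∀ i, ∃ (k : ℕ) (α : Equiv.Perm (Fin k)), (⟨k, α⟩ : PermS) ∈ Y ∧ IsPatternOf α π (blocks i)

/-- Membership in the wreath product `X ≀ Y`. -/
def InWreath (X Y : Set PermS) {n : ℕ} (π : Equiv.Perm (Fin n)) : Prop :=
  ∃ (m : ℕ) (σ : Equiv.Perm (Fin m)), (⟨m, σ⟩ : PermS) ∈ X ∧ IsYDeflation Y σ π

/-- The wreath product `X ≀ Y` as a set of permutations. -/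
def WreathSet (X Y : Set PermS) : Set PermS := {s : PermS | InWreath X Y s.2}

/-- The class of permutations avoiding every pattern in `B`. -/
def Av (B : Set PermS) : Set PermS := {s : PermS | ∀ b ∈ B, ¬ SInvolves b s}

/-- The basis of a class: minimal permutations not in it. -/
def PermBasis (C : Set PermS) : Set PermS :=
  {s : PermS | s ∉ C ∧ ∀ t : PermS, SInvolves t s → t ≠ s → t ∈ C}

/-- A permutation is simple if its only intervals are trivial. -/
def IsSimple {n : ℕ} (π : Equiv.Perm (Fin n)) : Prop :=
  ∀ s : Finset (Fin n), IsInterval π s → s.card ≤ 1 ∨ s = Finset.univ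

/-- Sum decomposable: a proper nonempty initial block with the smallest values. -/
def SumDecomposable {n : ℕ} (π : Equiv.Perm (Fin n)) : Prop :=
  ∃ s : Finset (Fin n), s.Nonempty ∧ s ≠ Finset.univ ∧
    ∀ x ∈ s, ∀ y : Fin n, y ∉ s → x < y ∧ π x < π y

/-- Skew decomposable: a proper nonempty initial block with the largest values. -/
def SkewDecomposable {n : ℕ} (π : Equiv.Perm (Fin n)) : Prop :=
  ∃ s : Finset (Fin n), s.Nonempty ∧ s ≠ Finset.univ ∧
    ∀ x ∈ s, ∀ y : Fin n, y ∉ s → x < y ∧ π y < π x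

-- ============ helpers ============
section Helpers

variable {n m : ℕ} {π : Equiv.Perm (Fin n)}

/-- rank permutation of an injective tuple -/
lemma exists_rank_perm {k : ℕ} (v : Fin k → Fin n) (hv : Function.Injective v) :
    ∃ σ : Equiv.Perm (Fin k), ∀ a b, σ a < σ b ↔ v a < v b := by
  classical
  set s := Tuple.sort v with hs
  have hsm : StrictMono (v ∘ s) :=
    (Tuple.monotone_sort v).strictMono_of_injective (hv.comp s.injective)
  refine ⟨s⁻¹, fun a b => ?_⟩
  have h1 : v a = (v ∘ s) (s⁻¹ a) := by simp
  have h2 : v b = (v ∘ s) (s⁻¹ b) := by simp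
  rw [h1, h2, hsm.lt_iff_lt]

lemma perm_eq_of_lt_iff {k : ℕ} {σ τ : Equiv.Perm (Fin k)}
    (h : ∀ a b, σ a < σ b ↔ τ a < τ b) : σ = τ := by
  have hsm : StrictMono (σ ∘ τ.symm) := by
    intro a b hab
    have : τ (τ.symm a) < τ (τ.symm b) := by simpa using hab
    exact (h _ _).mpr this
  have hid : StrictMono (id : Fin k → Fin k) := strictMono_id
  have hr : Set.range (σ ∘ τ.symm) = Set.range (id : Fin k → Fin k) := by
    rw [Set.range_comp, Equiv.range_eq_univ, Set.image_univ, Equiv.range_eq_univ, Set.range_id]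
  haveI : WellFoundedLT (Fin k) := inferInstance
  have h2 := (hsm.range_inj hid).1 hr
  apply Equiv.ext
  intro x
  have := congrFun h2 (τ x)
  simpa using this

lemma consec_filter_ge {s : Finset (Fin n)} (hs : Consec s) (x0 : Fin n) :
    Consec (s.filter (fun y => x0 ≤ y)) := by
  intro a b c ha hc hab hbc
  simp only [Finset.mem_filter] at *
  exact ⟨hs ha.1 hc.1 hab hbc, le_trans ha.2 hab⟩

lemma consec_sdiff {s t : Finset (Fin n)} (hs : Consec s) (ht : Consec t)
    (hw : ∃ w ∈ t, w ∉ s) : Consec (s \ t) := by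
  intro a b c ha hc hab hbc
  simp only [Finset.mem_sdiff] at *
  refine ⟨hs ha.1 hc.1 hab hbc, fun hb => ?_⟩
  obtain ⟨w, hwt, hws⟩ := hw
  rcases le_or_gt w a with hwa | haw
  · exact ha.2 (ht hwt hb hwa hab)
  · rcases le_or_gt c w with hcw | hwc
    · exact hc.2 (ht hb hwt hbc hcw)
    · exact hws (hs ha.1 hc.1 haw.le hwc.le)

lemma consec_separated {s t : Finset (Fin n)} (hs : Consec s) (ht : Consec t)
    (hd : ∀ x, x ∈ s → x ∉ t) (hsn : s.Nonempty) (htn : t.Nonempty) :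
    (∀ x ∈ s, ∀ y ∈ t, x < y) ∨ (∀ x ∈ s, ∀ y ∈ t, y < x) := by
  obtain ⟨a0, ha0⟩ := hsn
  obtain ⟨b0, hb0⟩ := htn
  rcases lt_or_gt_of_ne (fun h : a0 = b0 => hd a0 ha0 (h ▸ hb0)) with h0 | h0
  · left
    intro a ha b hb
    by_contra hba
    push_neg at hba
    rcases le_or_gt a0 b with hh | hh
    · exact hd b (hs ha0 ha hh hba) hb
    · exact hd a0 ha0 (ht hb hb0 hh.le h0.le)
  · right
    intro a ha b hb
    by_contra hab
    push_neg at hab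
    rcases le_or_gt b0 a with hh | hh
    · exact hd a ha (ht hb0 hb hh hab)
    · exact hd b0 (hs ha ha0 hh.le h0.le) hb0

lemma exists_isPatternOf (π : Equiv.Perm (Fin n)) (s : Finset (Fin n)) :
    ∃ (k : ℕ) (α : Equiv.Perm (Fin k)), IsPatternOf α π s := by
  classical
  set k := s.card with hk
  set e := s.orderIsoOfFin rfl with he
  set f : Fin k → Fin n := fun i => (e i : Fin n) with hf
  have hfs : StrictMono f := fun a b hab => by
    have := e.strictMono hab
    exact this
  have hv : Function.Injective (fun i => π (f i)) :=
    fun a b hab => hfs.injective (π.injective hab)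
  obtain ⟨α, hα⟩ := exists_rank_perm (fun i => π (f i)) hv
  exact ⟨k, α, f, hfs, fun i => (e i).2, fun x hx => ⟨e.symm ⟨x, hx⟩, by simp [hf]⟩, hα⟩

lemma involves_of_patterns {k ks : ℕ} {α : Equiv.Perm (Fin k)} {β : Equiv.Perm (Fin ks)}
    {s t : Finset (Fin n)} (hst : s ⊆ t)
    (hα : IsPatternOf α π s) (hβ : IsPatternOf β π t) : Involves α β := by
  obtain ⟨f, hfm, hfs, _, hfiff⟩ := hα
  obtain ⟨g, hgm, _, hgsurj, hgiff⟩ := hβ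
  have hchoice : ∀ i, ∃ a, g a = f i := fun i => hgsurj (f i) (hst (hfs i))
  choose h hh using hchoice
  refine ⟨h, ?_, fun a b => ?_⟩
  · intro a b hab
    have : g (h a) < g (h b) := by rw [hh, hh]; exact hfm hab
    by_contra hc
    push_neg at hc
    exact absurd (hgm.monotone hc) (not_le.mpr this)
  · rw [hfiff, ← hh a, ← hh b, hgiff]

/-- index of the block containing a point -/
noncomputable def bidx {σ : Equiv.Perm (Fin m)} {blocks : Fin m → Finset (Fin n)}
    (h : IsInflation π σ blocks) (x : Fin n) : Fin m := (h.2.2.1 x).exists.choose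

lemma bidx_mem {σ : Equiv.Perm (Fin m)} {blocks : Fin m → Finset (Fin n)}
    (h : IsInflation π σ blocks) (x : Fin n) : x ∈ blocks (bidx h x) :=
  (h.2.2.1 x).exists.choose_spec

lemma bidx_eq {σ : Equiv.Perm (Fin m)} {blocks : Fin m → Finset (Fin n)}
    (h : IsInflation π σ blocks) {x : Fin n} {i : Fin m} (hx : x ∈ blocks i) :
    bidx h x = i :=
  (h.2.2.1 x).unique (bidx_mem h x) hx

lemma bidx_mono {σ : Equiv.Perm (Fin m)} {blocks : Fin m → Finset (Fin n)}
    (h : IsInflation π σ blocks) {x y : Fin n} (hxy : x ≤ y) : bidx h x ≤ bidx h y := by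
  by_contra hc
  push_neg at hc
  exact absurd (h.2.2.2.1 _ _ hc y (bidx_mem h y) x (bidx_mem h x)) (not_lt.mpr hxy)

/-- From the first four inflation conditions, a skeleton permutation exists. -/
lemma exists_inflation {m' : ℕ} (π : Equiv.Perm (Fin n)) (blocks : Fin m' → Finset (Fin n))
    (h1 : ∀ i, (blocks i).Nonempty) (h2 : ∀ i, IsInterval π (blocks i))
    (h3 : ∀ x : Fin n, ∃! i, x ∈ blocks i)
    (h4 : ∀ i j : Fin m', i < j → ∀ x ∈ blocks i, ∀ y ∈ blocks j, x < y) :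
    ∃ σ' : Equiv.Perm (Fin m'), IsInflation π σ' blocks := by
  classical
  have hdisj : ∀ i j : Fin m', i ≠ j → ∀ x, x ∈ blocks i → x ∉ blocks j := by
    intro i j hij x hxi hxj
    exact hij ((h3 x).unique hxi hxj)
  have hsep : ∀ i j : Fin m', i ≠ j →
      (∀ x ∈ (blocks i).image π, ∀ y ∈ (blocks j).image π, x < y) ∨
      (∀ x ∈ (blocks i).image π, ∀ y ∈ (blocks j).image π, y < x) := by
    intro i j hij
    refine consec_separated (h2 i).2 (h2 j).2 ?_ ((h1 i).image π) ((h1 j).image π)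
    intro x hxi hxj
    obtain ⟨a, ha, rfl⟩ := Finset.mem_image.mp hxi
    obtain ⟨b, hb, hba⟩ := Finset.mem_image.mp hxj
    exact hdisj i j hij a ha (π.injective hba ▸ hb)
  set v : Fin m' → Fin n := fun i => π (h1 i).choose with hv
  have hvmem : ∀ i, v i ∈ (blocks i).image π := fun i =>
    Finset.mem_image_of_mem π (h1 i).choose_spec
  have hvinj : Function.Injective v := by
    intro i j hij
    by_contra hne
    rcases hsep i j hne with hc | hc
    · exact absurd (hij ▸ hc _ (hvmem i) _ (hvmem j)) (lt_irrefl _)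
    · exact absurd (hij ▸ hc _ (hvmem i) _ (hvmem j)) (lt_irrefl _)
  obtain ⟨σ', hσ'⟩ := exists_rank_perm v hvinj
  refine ⟨σ', h1, h2, h3, h4, ?_⟩
  intro i j hij x hx y hy
  rcases hsep i j hij with hc | hc
  · constructor
    · intro _; exact hc _ (Finset.mem_image_of_mem π hx) _ (Finset.mem_image_of_mem π hy)
    · intro _; exact (hσ' i j).mpr (hc _ (hvmem i) _ (hvmem j))
  · constructor
    · intro h
      exact absurd (hc _ (hvmem i) _ (hvmem j)) (not_lt.mpr ((hσ' i j).mp h).le)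
    · intro h
      exact absurd (hc _ (Finset.mem_image_of_mem π hx) _ (Finset.mem_image_of_mem π hy))
        (not_lt.mpr h.le)

/-- Every permutation is a `Y`-deflation of itself (via singleton blocks). -/
lemma self_deflation (Y : Set PermS) (h1 : (⟨1, 1⟩ : PermS) ∈ Y)
    (π : Equiv.Perm (Fin n)) : IsYDeflation Y π π := by
  classical
  refine ⟨fun i => {i}, ⟨?_, ?_, ?_, ?_, ?_⟩, ?_⟩
  · intro i; exact ⟨i, Finset.mem_singleton_self i⟩
  · intro i
    constructor
    · intro a b c ha hc hab hbc
      simp only [Finset.mem_singleton] at *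
      subst ha
      exact le_antisymm (hc ▸ hbc) hab
    · intro a b c ha hc hab hbc
      simp only [Finset.image_singleton, Finset.mem_singleton] at *
      subst ha
      exact le_antisymm (hc ▸ hbc) hab
  · intro x; exact ⟨x, Finset.mem_singleton_self x, fun j hj => (Finset.mem_singleton.mp hj).symm⟩
  · intro i j hij x hx y hy
    simp only [Finset.mem_singleton] at hx hy
    subst hx; subst hy; exact hij
  · intro i j _ x hx y hy
    simp only [Finset.mem_singleton] at hx hy
    subst hx; subst hy; exact Iff.rfl
  · intro i
    refine ⟨1, 1, h1, fun _ => i, fun a b hab => absurd hab (by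
      have : a = b := Subsingleton.elim a b
      simp [this]), fun _ => Finset.mem_singleton_self i,
      fun x hx => ⟨0, (Finset.mem_singleton.mp hx).symm⟩, fun a b => ?_⟩
    have : a = b := Subsingleton.elim a b
    subst this
    simp

end Helpers
section Surgery

lemma surgery (Y : Set PermS) (hY : IsPermClass Y) {n m : ℕ} (π : Equiv.Perm (Fin n))
    {σ τ : Equiv.Perm (Fin m)} {B E : Fin m → Finset (Fin n)}
    (hBinf : IsInflation π σ B)
    (hBpat : ∀ i, ∃ (k : ℕ) (α : Equiv.Perm (Fin k)), (⟨k, α⟩ : PermS) ∈ Y ∧ IsPatternOf α π (B i))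
    (hEinf : IsInflation π τ E)
    (hEpat : ∀ i, ∃ (k : ℕ) (α : Equiv.Perm (Fin k)), (⟨k, α⟩ : PermS) ∈ Y ∧ IsPatternOf α π (E i))
    (r j : Fin m) (x0 : Fin n)
    (hrj : (r : ℕ) < (j : ℕ))
    (hx0B : x0 ∈ B j) (hx0E : x0 ∈ E r) (hx0min : ∀ y ∈ E r, x0 ≤ y)
    (hsub : ∀ y ∈ B j, y < x0 → y ∈ E ⟨(r : ℕ) - 1, Nat.lt_of_le_of_lt (Nat.sub_le _ _) r.isLt⟩)
    (hwit : (∃ y ∈ B j, y < x0) →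
      ∃ w ∈ E ⟨(r : ℕ) - 1, Nat.lt_of_le_of_lt (Nat.sub_le _ _) r.isLt⟩, w ∉ B j) :
    ∃ ρ : Equiv.Perm (Fin ((r : ℕ) + (m - (j : ℕ)))), IsYDeflation Y ρ π := by
  classical
  have hjm : (j : ℕ) < m := j.isLt
  have hrm : (r : ℕ) < m := r.isLt
  set m' := (r : ℕ) + (m - (j : ℕ)) with hm'
  have hm'm : m' < m := by omega
  set r' : Fin m := ⟨(r : ℕ) - 1, Nat.lt_of_le_of_lt (Nat.sub_le _ _) r.isLt⟩ with hr'def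
  have hblkbound : ∀ k : Fin m', (j : ℕ) + ((k : ℕ) - (r : ℕ)) < m := fun k => by
    have := k.isLt; omega
  set blk : Fin m' → Fin m := fun k => ⟨(j : ℕ) + ((k : ℕ) - (r : ℕ)), hblkbound k⟩ with hblkdef
  set emb : Fin m' → Fin m := fun k => ⟨(k : ℕ), lt_trans k.isLt hm'm⟩ with hembdef
  set NB : Fin m' → Finset (Fin n) :=
    fun k => if (k : ℕ) < (r : ℕ) then E (emb k) else (B (blk k)).filter (fun y => x0 ≤ y)
    with hNBdef
  have hNBlt : ∀ k : Fin m', (k : ℕ) < (r : ℕ) → NB k = E (emb k) := by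
    intro k h; simp only [hNBdef, if_pos h]
  have hNBge : ∀ k : Fin m', ¬((k : ℕ) < (r : ℕ)) →
      NB k = (B (blk k)).filter (fun y => x0 ≤ y) := by
    intro k h; simp only [hNBdef, if_neg h]
  have hblk_r : ∀ k : Fin m', (k : ℕ) = (r : ℕ) → blk k = j := by
    intro k h; apply Fin.ext; simp [hblkdef, h]
  have hfilterB : ∀ l : Fin m, (j : ℕ) < (l : ℕ) →
      (B l).filter (fun y => x0 ≤ y) = B l := by
    intro l hl
    apply Finset.filter_true_of_mem
    intro y hy
    exact (hBinf.2.2.2.1 j l (Fin.lt_def.mpr hl) x0 hx0B y hy).le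
  have hNBgt : ∀ k : Fin m', (r : ℕ) < (k : ℕ) → NB k = B (blk k) := by
    intro k h
    rw [hNBge k (by omega)]
    exact hfilterB (blk k) (by simp [hblkdef]; omega)
  have hNBr : ∀ k : Fin m', (k : ℕ) = (r : ℕ) →
      NB k = (B j).filter (fun y => x0 ≤ y) := by
    intro k h
    rw [hNBge k (by omega), hblk_r k h]
  have hiBx0 : bidx hBinf x0 = j := bidx_eq hBinf hx0B
  have hiEx0 : bidx hEinf x0 = r := bidx_eq hEinf hx0E
  -- coverage
  have hcov : ∀ x : Fin n, ∃ k : Fin m', x ∈ NB k := by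
    intro x
    rcases lt_or_ge ((bidx hEinf x : ℕ)) (r : ℕ) with h | h
    · refine ⟨⟨(bidx hEinf x : ℕ), by omega⟩, ?_⟩
      rw [hNBlt _ h]
      have he : emb ⟨(bidx hEinf x : ℕ), by omega⟩ = bidx hEinf x := by
        apply Fin.ext; simp [hembdef]
      rw [he]; exact bidx_mem hEinf x
    · have hx0x : x0 ≤ x := by
        rcases eq_or_lt_of_le h with heq | hlt
        · have hbe : bidx hEinf x = r := Fin.ext heq.symm
          exact hx0min x (hbe ▸ bidx_mem hEinf x)
        · exact (hEinf.2.2.2.1 r (bidx hEinf x) (Fin.lt_def.mpr hlt) x0 hx0E x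
            (bidx_mem hEinf x)).le
      have hjx : (j : ℕ) ≤ (bidx hBinf x : ℕ) := by
        have := bidx_mono hBinf hx0x
        rw [hiBx0] at this
        exact Fin.le_def.mp this
      refine ⟨⟨(r : ℕ) + ((bidx hBinf x : ℕ) - (j : ℕ)), by
        have := (bidx hBinf x).isLt; omega⟩, ?_⟩
      rw [hNBge _ (by simp only [Fin.val_mk]; omega)]
      have hbe : blk ⟨(r : ℕ) + ((bidx hBinf x : ℕ) - (j : ℕ)), by
          have := (bidx hBinf x).isLt; omega⟩ = bidx hBinf x := by
        apply Fin.ext; simp [hblkdef]; omega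
      rw [hbe]
      exact Finset.mem_filter.mpr ⟨bidx_mem hBinf x, hx0x⟩
  have huni : ∀ (x : Fin n) (k1 k2 : Fin m'), x ∈ NB k1 → x ∈ NB k2 → k1 = k2 := by
    have key : ∀ (x : Fin n) (k1 k2 : Fin m'), (k1 : ℕ) < (r : ℕ) → ¬((k2 : ℕ) < (r : ℕ)) →
        x ∈ NB k1 → x ∈ NB k2 → False := by
      intro x k1 k2 hk1 hk2 h1 h2
      rw [hNBlt _ hk1] at h1
      rw [hNBge _ hk2] at h2
      have hx0x : x0 ≤ x := (Finset.mem_filter.mp h2).2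
      have h5 := bidx_mono hEinf hx0x
      rw [hiEx0, bidx_eq hEinf h1] at h5
      have := Fin.le_def.mp h5
      simp [hembdef] at this
      omega
    intro x k1 k2 h1 h2
    by_cases hk1 : (k1 : ℕ) < (r : ℕ) <;> by_cases hk2 : (k2 : ℕ) < (r : ℕ)
    · rw [hNBlt _ hk1] at h1
      rw [hNBlt _ hk2] at h2
      have := (bidx_eq hEinf h1).symm.trans (bidx_eq hEinf h2)
      have hval : (k1 : ℕ) = (k2 : ℕ) := by
        have := congrArg Fin.val this
        simpa [hembdef] using this
      exact Fin.ext hval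
    · exact absurd (key x k1 k2 hk1 hk2 h1 h2) not_false
    · exact absurd (key x k2 k1 hk2 hk1 h2 h1) not_false
    · rw [hNBge _ hk1] at h1
      rw [hNBge _ hk2] at h2
      have e1 := bidx_eq hBinf (Finset.mem_filter.mp h1).1
      have e2 := bidx_eq hBinf (Finset.mem_filter.mp h2).1
      have := e1.symm.trans e2
      have hval : (j : ℕ) + ((k1 : ℕ) - (r : ℕ)) = (j : ℕ) + ((k2 : ℕ) - (r : ℕ)) := by
        have := congrArg Fin.val this
        simpa [hblkdef] using this
      exact Fin.ext (by omega)
  have h3' : ∀ x : Fin n, ∃! k : Fin m', x ∈ NB k := by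
    intro x
    obtain ⟨k, hk⟩ := hcov x
    exact ⟨k, hk, fun k2 hk2 => huni x k2 k hk2 hk⟩
  have h1' : ∀ k : Fin m', (NB k).Nonempty := by
    intro k
    rcases lt_trichotomy ((k : ℕ)) ((r : ℕ)) with h | h | h
    · rw [hNBlt _ h]; exact hEinf.1 _
    · rw [hNBr _ h]; exact ⟨x0, Finset.mem_filter.mpr ⟨hx0B, le_refl _⟩⟩
    · rw [hNBgt _ h]; exact hBinf.1 _
  have h4' : ∀ k1 k2 : Fin m', k1 < k2 → ∀ x ∈ NB k1, ∀ y ∈ NB k2, x < y := by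
    intro k1 k2 hk12 x hx y hy
    have hk12' : (k1 : ℕ) < (k2 : ℕ) := Fin.lt_def.mp hk12
    by_cases hk1 : (k1 : ℕ) < (r : ℕ)
    · by_cases hk2 : (k2 : ℕ) < (r : ℕ)
      · rw [hNBlt _ hk1] at hx
        rw [hNBlt _ hk2] at hy
        exact hEinf.2.2.2.1 (emb k1) (emb k2) (Fin.lt_def.mpr (by simpa [hembdef] using hk12'))
          x hx y hy
      · rw [hNBlt _ hk1] at hx
        rw [hNBge _ hk2] at hy
        have hx0y : x0 ≤ y := (Finset.mem_filter.mp hy).2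
        have : x < x0 := hEinf.2.2.2.1 (emb k1) r (Fin.lt_def.mpr (by simpa [hembdef] using hk1))
          x hx x0 hx0E
        exact lt_of_lt_of_le this hx0y
    · have hk2 : ¬((k2 : ℕ) < (r : ℕ)) := by omega
      rw [hNBge _ hk1] at hx
      rw [hNBge _ hk2] at hy
      exact hBinf.2.2.2.1 (blk k1) (blk k2) (Fin.lt_def.mpr (by simp [hblkdef]; omega))
        x (Finset.mem_filter.mp hx).1 y (Finset.mem_filter.mp hy).1
  have h2' : ∀ k : Fin m', IsInterval π (NB k) := by
    intro k
    rcases lt_trichotomy ((k : ℕ)) ((r : ℕ)) with h | h | h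
    · rw [hNBlt _ h]; exact hEinf.2.1 _
    · rw [hNBr _ h]
      constructor
      · exact consec_filter_ge (hBinf.2.1 j).1 x0
      · by_cases hc : ∃ y ∈ B j, y < x0
        · have hr1 : 1 ≤ (r : ℕ) := by
            by_contra hr0
            have hr0' : (r : ℕ) = 0 := by omega
            obtain ⟨y, hyB, hyx⟩ := hc
            have := hsub y hyB hyx
            have hrr' : r' = r := Fin.ext (by simp [hr'def, hr0'])
            rw [hr'def] at this
            have h5 := hx0min y (by rw [← hrr']; exact this)
            exact absurd hyx (not_lt.mpr h5)
          have hMd : (B j).filter (fun y => x0 ≤ y) = B j \ E r' := by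
            ext v
            simp only [Finset.mem_filter, Finset.mem_sdiff]
            constructor
            · rintro ⟨hvB, hvx⟩
              refine ⟨hvB, fun hvE => ?_⟩
              have : v < x0 := hEinf.2.2.2.1 r' r
                (Fin.lt_def.mpr (by simp [hr'def]; omega)) v hvE x0 hx0E
              exact absurd hvx (not_le.mpr this)
            · rintro ⟨hvB, hvE⟩
              refine ⟨hvB, ?_⟩
              by_contra hvx
              push_neg at hvx
              exact hvE (hsub v hvB hvx)
          rw [hMd, Finset.image_sdiff _ _ π.injective]
          obtain ⟨w, hwE, hwB⟩ := hwit hc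
          refine consec_sdiff (hBinf.2.1 j).2 (hEinf.2.1 r').2
            ⟨π w, Finset.mem_image_of_mem π hwE, fun hpw => ?_⟩
          obtain ⟨u, huB, hu⟩ := Finset.mem_image.mp hpw
          exact hwB (π.injective hu ▸ huB)
        · have hM : (B j).filter (fun y => x0 ≤ y) = B j := by
            apply Finset.filter_true_of_mem
            intro y hy
            by_contra hxy
            push_neg at hxy
            exact hc ⟨y, hy, hxy⟩
          rw [hM]
          exact (hBinf.2.1 j).2
    · rw [hNBgt _ h]; exact hBinf.2.1 _
  obtain ⟨ρ, hρ⟩ := exists_inflation π NB h1' h2' h3' h4'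
  refine ⟨ρ, NB, hρ, ?_⟩
  intro k
  rcases lt_or_ge ((k : ℕ)) ((r : ℕ)) with h | h
  · rw [hNBlt _ h]; exact hEpat _
  · have hsubk : NB k ⊆ B (blk k) := by
      rw [hNBge _ (not_lt.mpr h)]
      exact Finset.filter_subset _ _
    obtain ⟨kb, β, hβY, hβ⟩ := hBpat (blk k)
    obtain ⟨ka, α, hα⟩ := exists_isPatternOf π (NB k)
    exact ⟨ka, α, hY ⟨ka, α⟩ ⟨kb, β⟩ (involves_of_patterns hsubk hα hβ) hβY, hα⟩

end Surgery
section Main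

lemma exists_shorter (Y : Set PermS) (hY : IsPermClass Y) {n m : ℕ} (π : Equiv.Perm (Fin n))
    {σ τ : Equiv.Perm (Fin m)} {B E : Fin m → Finset (Fin n)}
    (hBinf : IsInflation π σ B)
    (hBpat : ∀ i, ∃ (k : ℕ) (α : Equiv.Perm (Fin k)), (⟨k, α⟩ : PermS) ∈ Y ∧ IsPatternOf α π (B i))
    (hEinf : IsInflation π τ E)
    (hEpat : ∀ i, ∃ (k : ℕ) (α : Equiv.Perm (Fin k)), (⟨k, α⟩ : PermS) ∈ Y ∧ IsPatternOf α π (E i))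
    (i : Fin m) (hlt : ∀ x ∈ B i, ∀ y ∈ E i, x < y) :
    ∃ (m'' : ℕ) (ρ : Equiv.Perm (Fin m'')), m'' < m ∧ IsYDeflation Y ρ π := by
  classical
  set S : Finset (Fin n) := Finset.univ.filter
    (fun x => (∀ y ∈ E (bidx hEinf x), x ≤ y) ∧ ((bidx hEinf x : ℕ) < (bidx hBinf x : ℕ)))
    with hSdef
  have hSmem : ∀ x : Fin n, x ∈ S ↔
      ((∀ y ∈ E (bidx hEinf x), x ≤ y) ∧ ((bidx hEinf x : ℕ) < (bidx hBinf x : ℕ))) := by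
    intro x; simp [hSdef]
  have hSne : S.Nonempty := by
    obtain ⟨x₁, hx₁⟩ := (hEinf.1 i).exists_mem
    have hx1m : x₁ = (E i).min' (hEinf.1 i) → True := fun _ => trivial
    clear hx1m hx₁
    set x₁ := (E i).min' (hEinf.1 i) with hx₁def
    have hx₁E : x₁ ∈ E i := Finset.min'_mem _ _
    have hiE : bidx hEinf x₁ = i := bidx_eq hEinf hx₁E
    refine ⟨x₁, (hSmem x₁).mpr ⟨?_, ?_⟩⟩
    · rw [hiE]; intro y hy; exact Finset.min'_le _ _ hy
    · rw [hiE]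
      rcases lt_trichotomy (bidx hBinf x₁) i with h | h | h
      · exfalso
        obtain ⟨b, hb⟩ := (hBinf.1 i).exists_mem
        have h5 := hBinf.2.2.2.1 _ i h x₁ (bidx_mem hBinf x₁) b hb
        exact absurd (hlt b hb x₁ hx₁E) (not_lt.mpr h5.le)
      · exfalso
        exact absurd (hlt x₁ (h ▸ bidx_mem hBinf x₁) x₁ hx₁E) (lt_irrefl _)
      · exact Fin.lt_def.mp h
  set x0 := S.min' hSne with hx0def
  have hx0S := Finset.min'_mem S hSne
  rw [hSmem] at hx0S
  set r := bidx hEinf x0 with hrdef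
  set j := bidx hBinf x0 with hjdef
  have hrj : (r : ℕ) < (j : ℕ) := hx0S.2
  have hx0E : x0 ∈ E r := bidx_mem hEinf x0
  have hx0B : x0 ∈ B j := bidx_mem hBinf x0
  have hx0min : ∀ y ∈ E r, x0 ≤ y := hx0S.1
  have hr1 : 1 ≤ (r : ℕ) := by
    by_contra hr0
    have hr0' : (r : ℕ) = 0 := by omega
    have hn : 0 < n := Fin.pos_iff_nonempty.mpr ⟨x0⟩
    set z0 : Fin n := ⟨0, hn⟩ with hz0
    have hz0E : (bidx hEinf z0 : ℕ) = 0 := by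
      have := bidx_mono hEinf (show z0 ≤ x0 from Fin.mk_le_of_le_val (Nat.zero_le _))
      rw [← hrdef] at this
      have := Fin.le_def.mp this
      omega
    have hz0r : bidx hEinf z0 = r := Fin.ext (by omega)
    have hxz : x0 ≤ z0 := hx0min z0 (hz0r ▸ bidx_mem hEinf z0)
    have hxz0 : x0 = z0 := le_antisymm hxz (Fin.mk_le_of_le_val (Nat.zero_le _))
    obtain ⟨b, hb⟩ := (hBinf.1 ⟨0, lt_of_le_of_lt (Nat.zero_le _) j.isLt⟩).exists_mem
    have hjz : (j : ℕ) ≤ 0 := by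
      have h5 := bidx_mono hBinf (show z0 ≤ b from Fin.mk_le_of_le_val (Nat.zero_le _))
      rw [bidx_eq hBinf hb] at h5
      have h6 : bidx hBinf x0 = bidx hBinf z0 := congrArg _ hxz0
      have h7 := Fin.le_def.mp h5
      rw [hjdef, h6]
      exact h7
    omega
  have hnotS : ∀ z : Fin n, z < x0 →
      ¬((∀ y ∈ E (bidx hEinf z), z ≤ y) ∧ ((bidx hEinf z : ℕ) < (bidx hBinf z : ℕ))) := by
    intro z hz hcond
    exact absurd (Finset.min'_le S z ((hSmem z).mpr hcond)) (not_le.mpr hz)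
  have hsub : ∀ y ∈ B j, y < x0 →
      y ∈ E ⟨(r : ℕ) - 1, Nat.lt_of_le_of_lt (Nat.sub_le _ _) r.isLt⟩ := by
    intro y hyB hyx
    set k := bidx hEinf y with hkdef
    have hkr : (k : ℕ) ≤ (r : ℕ) := by
      have := bidx_mono hEinf hyx.le
      rw [← hrdef] at this
      exact Fin.le_def.mp this
    have hkne : (k : ℕ) ≠ (r : ℕ) := by
      intro hkr'
      have : k = r := Fin.ext hkr'
      exact absurd (hx0min y (this ▸ bidx_mem hEinf y)) (not_le.mpr hyx)
    have hkle : (k : ℕ) ≤ (r : ℕ) - 1 := by omega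
    by_contra hyE
    have hklt : (k : ℕ) < (r : ℕ) - 1 := by
      rcases lt_or_eq_of_le hkle with h | h
      · exact h
      · exact absurd (show y ∈ E ⟨(r : ℕ) - 1, _⟩ from
          (Fin.ext h : k = ⟨(r : ℕ) - 1, _⟩) ▸ bidx_mem hEinf y) hyE
    set k1 : Fin m := ⟨(k : ℕ) + 1, by omega⟩ with hk1def
    set z := (E k1).min' (hEinf.1 k1) with hzdef
    have hzE : z ∈ E k1 := Finset.min'_mem _ _
    have hyz : y < z := hEinf.2.2.2.1 k k1 (Fin.lt_def.mpr (by simp [hk1def]))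
      y (bidx_mem hEinf y) z hzE
    have hzx : z < x0 := hEinf.2.2.2.1 k1 r (Fin.lt_def.mpr (by simp [hk1def]; omega))
      z hzE x0 hx0E
    have hzB : z ∈ B j := (hBinf.2.1 j).1 hyB hx0B hyz.le hzx.le
    apply hnotS z hzx
    constructor
    · rw [bidx_eq hEinf hzE]
      intro w hw
      exact Finset.min'_le _ _ hw
    · rw [bidx_eq hEinf hzE, bidx_eq hBinf hzB]
      simp [hk1def]
      omega
  have hwit : (∃ y ∈ B j, y < x0) →
      ∃ w ∈ E ⟨(r : ℕ) - 1, Nat.lt_of_le_of_lt (Nat.sub_le _ _) r.isLt⟩, w ∉ B j := by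
    intro _
    set r' : Fin m := ⟨(r : ℕ) - 1, Nat.lt_of_le_of_lt (Nat.sub_le _ _) r.isLt⟩ with hr'def
    set w := (E r').min' (hEinf.1 r') with hwdef
    have hwE : w ∈ E r' := Finset.min'_mem _ _
    refine ⟨w, hwE, fun hwB => ?_⟩
    have hwx : w < x0 := hEinf.2.2.2.1 r' r (Fin.lt_def.mpr (by simp [hr'def]; omega))
      w hwE x0 hx0E
    apply hnotS w hwx
    constructor
    · rw [bidx_eq hEinf hwE]
      intro u hu
      exact Finset.min'_le _ _ hu
    · rw [bidx_eq hEinf hwE, bidx_eq hBinf hwB]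
      simp [hr'def]
      omega
  obtain ⟨ρ, hρ⟩ := surgery Y hY π hBinf hBpat hEinf hEpat r j x0 hrj hx0B hx0E hx0min hsub hwit
  exact ⟨_, ρ, by have := j.isLt; omega, hρ⟩

end Main


/-- for every permutation class `Y` containing the permutation `1`
and every permutation `π`, the shortest `Y`-deflation of `π` exists and is unique. -/
theorem shortest_deflation_unique (Y : Set PermS) (hY : IsPermClass Y)
    (h1 : (⟨1, 1⟩ : PermS) ∈ Y) {n : ℕ} (π : Equiv.Perm (Fin n)) :
    ∃! p : PermS, IsYDeflation Y p.2 π ∧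
      ∀ q : PermS, IsYDeflation Y q.2 π → p.1 ≤ q.1 := by
  classical
  set L : Set ℕ := {m | ∃ σ' : Equiv.Perm (Fin m), IsYDeflation Y σ' π} with hL
  have hLne : L.Nonempty := ⟨n, π, self_deflation Y h1 π⟩
  set m0 := sInf L with hm0def
  obtain ⟨σ0, hσ0⟩ := Nat.sInf_mem hLne
  have hmin : ∀ q : PermS, IsYDeflation Y q.2 π → m0 ≤ q.1 := by
    rintro ⟨mq, τ⟩ hq
    exact Nat.sInf_le ⟨τ, hq⟩
  refine ⟨⟨m0, σ0⟩, ⟨hσ0, hmin⟩, ?_⟩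
  rintro ⟨mq, τ⟩ ⟨hqd, hqmin⟩
  have hmq : mq = m0 := le_antisymm (hqmin ⟨m0, σ0⟩ hσ0) (hmin ⟨mq, τ⟩ hqd)
  subst hmq
  obtain ⟨Bq, hBinf, hBpat⟩ := hqd
  obtain ⟨B0, h0inf, h0pat⟩ := hσ0
  have htrans : ∀ i : Fin m0, ∃ x, x ∈ B0 i ∧ x ∈ Bq i := by
    intro i
    by_contra hc
    push_neg at hc
    have hsep := consec_separated (h0inf.2.1 i).1 (hBinf.2.1 i).1 hc (h0inf.1 i) (hBinf.1 i)
    rcases hsep with hcase | hcase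
    · obtain ⟨m'', ρ, hm'', hρ⟩ := exists_shorter Y hY π h0inf h0pat hBinf hBpat i hcase
      exact absurd (hmin ⟨m'', ρ⟩ hρ) (not_le.mpr hm'')
    · obtain ⟨m'', ρ, hm'', hρ⟩ := exists_shorter Y hY π hBinf hBpat h0inf h0pat i
        (fun x hx y hy => hcase y hy x hx)
      exact absurd (hmin ⟨m'', ρ⟩ hρ) (not_le.mpr hm'')
  choose x hx0 hxq using htrans
  have heq : τ = σ0 := by
    apply perm_eq_of_lt_iff
    intro a b
    by_cases hab : a = b
    · subst hab; simp
    · rw [hBinf.2.2.2.2 a b hab (x a) (hxq a) (x b) (hxq b),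
        ← h0inf.2.2.2.2 a b hab (x a) (hx0 a) (x b) (hx0 b)]
  exact congrArg (Sigma.mk m0) heq
end

section
/- Let X and Y be permutation classes with 1 ∈ Y. Then a permutation π belongs to the wreath product X ≀ Y if and only if the Y-profile π^Y of π belongs to X. -/
namespace WreathAux

open Finset

variable {n : ℕ}

/-- two elements of a consecutive set sandwich: basic lemmas -/
lemma consec_union {P Q : Finset (Fin n)} (hP : Consec P) (hQ : Consec Q)
    (h : ∃ w, w ∈ P ∧ w ∈ Q) : Consec (P ∪ Q) := by
  obtain ⟨w, hwP, hwQ⟩ := h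
  intro a b c ha hc hab hbc
  rw [Finset.mem_union] at ha hc ⊢
  rcases ha with ha | ha <;> rcases hc with hc | hc
  · exact Or.inl (hP ha hc hab hbc)
  · rcases le_or_gt b w with hbw | hwb
    · exact Or.inl (hP ha hwP hab hbw)
    · exact Or.inr (hQ hwQ hc hwb.le hbc)
  · rcases le_or_gt b w with hbw | hwb
    · exact Or.inr (hQ ha hwQ hab hbw)
    · exact Or.inl (hP hwP hc hwb.le hbc)
  · exact Or.inr (hQ ha hc hab hbc)

lemma consec_sdiff {P Q : Finset (Fin n)} (hP : Consec P) (hQ : Consec Q)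
    (h : ∃ w, w ∈ P ∧ w ∈ Q) (h2 : ∃ w, w ∈ Q ∧ w ∉ P) : Consec (P \ Q) := by
  obtain ⟨w0, hw0Q, hw0P⟩ := h2
  intro a b c ha hc hab hbc
  rw [Finset.mem_sdiff] at ha hc ⊢
  refine ⟨hP ha.1 hc.1 hab hbc, ?_⟩
  intro hbQ
  have hab' : a < b := lt_of_le_of_ne hab (by rintro rfl; exact ha.2 hbQ)
  have hbc' : b < c := lt_of_le_of_ne hbc (by rintro rfl; exact hc.2 hbQ)
  rcases lt_trichotomy w0 b with hw | hw | hw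
  · rcases le_or_gt a w0 with h1 | h1
    · exact hw0P (hP ha.1 hc.1 h1 (hw.le.trans hbc))
    · exact ha.2 (hQ hw0Q hbQ h1.le hab)
  · exact hw0P (hw ▸ (hP ha.1 hc.1 hab hbc))
  · rcases le_or_gt w0 c with h1 | h1
    · exact hw0P (hP ha.1 hc.1 (hab.trans hw.le) h1)
    · exact hc.2 (hQ hbQ hw0Q hbc h1.le)

/-- if `w ∉ V` (consecutive) and `b, c ∈ V` then `w` compares the same way to `b` and `c`. -/
lemma consec_lt_iff {V : Finset (Fin n)} (hV : Consec V) {w b c : Fin n}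
    (hw : w ∉ V) (hb : b ∈ V) (hc : c ∈ V) : (w < b ↔ w < c) := by
  constructor
  · intro h
    by_contra hcw
    push_neg at hcw
    have : c < w := lt_of_le_of_ne hcw (by rintro rfl; exact hw hc)
    exact hw (hV hc hb this.le h.le)
  · intro h
    by_contra hbw
    push_neg at hbw
    have : b < w := lt_of_le_of_ne hbw (by rintro rfl; exact hw hb)
    exact hw (hV hb hc this.le h.le)

lemma consec_lt_iff' {V : Finset (Fin n)} (hV : Consec V) {w b c : Fin n}
    (hw : w ∉ V) (hb : b ∈ V) (hc : c ∈ V) : (b < w ↔ c < w) := by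
  have h1 := consec_lt_iff hV hw hb hc
  have hb' : b ≠ w := by rintro rfl; exact hw hb
  have hc' : c ≠ w := by rintro rfl; exact hw hc
  constructor
  · intro h
    rcases lt_trichotomy c w with h2 | h2 | h2
    · exact h2
    · exact absurd h2 hc'
    · exact absurd (h1.mpr h2) (not_lt.mpr h.le)
  · intro h
    rcases lt_trichotomy b w with h2 | h2 | h2
    · exact h2
    · exact absurd h2 hb'
    · exact absurd (h1.mp h2) (not_lt.mpr h.le)

/-- all-below iff one-below, for `w` outside a consecutive set. -/
lemma consec_all_lt_iff {V : Finset (Fin n)} (hV : Consec V) {w b : Fin n}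
    (hw : w ∉ V) (hb : b ∈ V) : (b < w ↔ ∀ c ∈ V, c < w) :=
  ⟨fun h c hc => (consec_lt_iff' hV hw hb hc).mp h, fun h => h b hb⟩

/-- separation: disjoint consecutive sets compare uniformly. -/
lemma consec_sep {P Q : Finset (Fin n)} (hP : Consec P) (hQ : Consec Q)
    (hd : ∀ x, x ∈ P → x ∈ Q → False) {p q p' q' : Fin n}
    (hp : p ∈ P) (hq : q ∈ Q) (hp' : p' ∈ P) (hq' : q' ∈ Q) : (p < q ↔ p' < q') := by
  have key : ∀ a b a' b' : Fin n, a ∈ P → b ∈ Q → a' ∈ P → b' ∈ Q → a < b → a' < b' := by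
    intro a b a' b' ha hb ha' hb' hab
    by_contra h
    push_neg at h
    have hne : b' ≠ a' := by rintro rfl; exact hd _ ha' hb'
    have hba : b' < a' := lt_of_le_of_ne h hne
    rcases le_or_gt a b' with h1 | h1
    · have : b' ∈ P := hP ha ha' h1 hba.le
      exact hd _ this hb'
    · have : a ∈ Q := hQ hb' hb h1.le hab.le
      exact hd _ ha this
  exact ⟨fun h => key _ _ _ _ hp hq hp' hq' h, fun h => key _ _ _ _ hp' hq' hp hq h⟩

end WreathAux
namespace WreathAux
open Finset
variable {n : ℕ} {π : Equiv.Perm (Fin n)}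

lemma img_mem {s : Finset (Fin n)} {x : Fin n} (hx : x ∈ s) : π x ∈ s.image π :=
  Finset.mem_image_of_mem _ hx

lemma img_mem_iff {s : Finset (Fin n)} {x : Fin n} : π x ∈ s.image π ↔ x ∈ s := by
  constructor
  · intro h
    obtain ⟨y, hy, hyx⟩ := Finset.mem_image.mp h
    rwa [← π.injective hyx]
  · exact img_mem

lemma interval_union {s t : Finset (Fin n)} (hs : IsInterval π s) (ht : IsInterval π t)
    (h : (s ∩ t).Nonempty) : IsInterval π (s ∪ t) := by
  obtain ⟨w, hw⟩ := h
  rw [Finset.mem_inter] at hw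
  constructor
  · exact consec_union hs.1 ht.1 ⟨w, hw.1, hw.2⟩
  · rw [Finset.image_union]
    exact consec_union hs.2 ht.2 ⟨π w, img_mem hw.1, img_mem hw.2⟩

lemma interval_sdiff {s t : Finset (Fin n)} (hs : IsInterval π s) (ht : IsInterval π t)
    (h : (s ∩ t).Nonempty) (h2 : ∃ z ∈ t, z ∉ s) : IsInterval π (s \ t) := by
  obtain ⟨w, hw⟩ := h
  rw [Finset.mem_inter] at hw
  obtain ⟨z, hzt, hzs⟩ := h2
  constructor
  · exact consec_sdiff hs.1 ht.1 ⟨w, hw.1, hw.2⟩ ⟨z, hzt, hzs⟩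
  · rw [Finset.image_sdiff _ _ π.injective]
    exact consec_sdiff hs.2 ht.2 ⟨π w, img_mem hw.1, img_mem hw.2⟩
      ⟨π z, img_mem hzt, fun hc => hzs (img_mem_iff.mp hc)⟩

/-- a block has a `Y`-pattern. -/
def YBlockPat (Y : Set PermS) (π : Equiv.Perm (Fin n)) (s : Finset (Fin n)) : Prop :=
  ∃ (k : ℕ) (α : Equiv.Perm (Fin k)), (⟨k, α⟩ : PermS) ∈ Y ∧ IsPatternOf α π s

/-- every finite set of positions carries a pattern. -/
lemma exists_pattern (π : Equiv.Perm (Fin n)) (s : Finset (Fin n)) :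
    ∃ α : Equiv.Perm (Fin s.card), IsPatternOf α π s := by
  classical
  have hcard : (s.image π).card = s.card := Finset.card_image_of_injective _ π.injective
  let e1 := s.orderIsoOfFin rfl
  let e2 := (s.image π).orderIsoOfFin hcard
  have hmem : ∀ i : Fin s.card, π (e1 i) ∈ s.image π := fun i => img_mem (e1 i).2
  let f : Fin s.card → Fin s.card := fun i => e2.symm ⟨π (e1 i), hmem i⟩
  have hinj : Function.Injective f := by
    intro a b hab
    have := e2.symm.injective hab
    have := π.injective (congrArg Subtype.val this)
    exact e1.injective (Subtype.ext this)
  obtain ⟨α, hα⟩ : ∃ α : Equiv.Perm (Fin s.card), ∀ i, α i = f i :=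
    ⟨Equiv.ofBijective f ((Finite.injective_iff_bijective).mp hinj), fun _ => rfl⟩
  refine ⟨α, fun i => (e1 i : Fin n), ?_, ?_, ?_, ?_⟩
  · intro a b hab
    have : e1 a < e1 b := e1.strictMono hab
    exact this
  · exact fun i => (e1 i).2
  · intro x hx
    obtain ⟨i, hi⟩ := e1.surjective ⟨x, hx⟩
    exact ⟨i, congrArg Subtype.val hi⟩
  · intro a b
    rw [hα, hα]
    constructor
    · intro h
      have := e2.symm.lt_iff_lt.mp h
      exact this
    · intro h
      exact e2.symm.lt_iff_lt.mpr h

/-- `Y`-patterns are inherited by subsets (using that `Y` is a class). -/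
lemma ypat_subset {Y : Set PermS} (hY : IsPermClass Y) {s s' : Finset (Fin n)}
    (hss : s' ⊆ s) (h : YBlockPat Y π s) : YBlockPat Y π s' := by
  classical
  obtain ⟨k, α, hαY, f, hf, hfs, hfsurj, hford⟩ := h
  obtain ⟨α', f', hf', hfs', hfsurj', hford'⟩ := exists_pattern π s'
  refine ⟨s'.card, α', ?_, f', hf', hfs', hfsurj', hford'⟩
  refine hY _ _ ⟨fun i => Classical.choose (hfsurj (f' i) (hss (hfs' i))), ?_, ?_⟩ hαY
  all_goals
    have hspec : ∀ i, f (Classical.choose (hfsurj (f' i) (hss (hfs' i)))) = f' i :=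
      fun i => Classical.choose_spec (hfsurj (f' i) (hss (hfs' i)))
  · intro a b hab
    have h2 : f' a < f' b := hf' hab
    rw [← hspec a, ← hspec b] at h2
    exact (hf.lt_iff_lt).mp h2
  · intro a b
    rw [hford, hspec, hspec, ← hford']

end WreathAux
namespace WreathAux
open Finset
variable {n : ℕ}

/-- An ordered partition of the set `C` into `Y`-patterned intervals of `π`. -/
structure Blocks (Y : Set PermS) (π : Equiv.Perm (Fin n)) (C : Finset (Fin n))
    {m : ℕ} (A : Fin m → Finset (Fin n)) : Prop where
  nonempty : ∀ i, (A i).Nonempty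
  interval : ∀ i, IsInterval π (A i)
  subset : ∀ i, A i ⊆ C
  cover : ∀ x ∈ C, ∃ i, x ∈ A i
  disj : ∀ i j, i ≠ j → ∀ x, x ∈ A i → x ∈ A j → False
  ordered : ∀ i j, i < j → ∀ x ∈ A i, ∀ y ∈ A j, x < y
  ypat : ∀ i, YBlockPat Y π (A i)

variable {Y : Set PermS} {π : Equiv.Perm (Fin n)} {C : Finset (Fin n)}

namespace Blocks

variable {m : ℕ} {A : Fin m → Finset (Fin n)} (hA : Blocks Y π C A)

/-- values of distinct blocks are disjoint -/
lemma img_disj (hA : Blocks Y π C A) {i j : Fin m} (hij : i ≠ j) :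
    ∀ v, v ∈ (A i).image π → v ∈ (A j).image π → False := by
  intro v hvi hvj
  obtain ⟨x, hx, rfl⟩ := Finset.mem_image.mp hvi
  exact hA.disj i j hij x hx (img_mem_iff.mp hvj)

/-- comparisons between values of two distinct blocks are uniform. -/
lemma cross (hA : Blocks Y π C A) {i j : Fin m} (hij : i ≠ j) {x y u v : Fin n}
    (hx : x ∈ A i) (hy : y ∈ A j) (hu : u ∈ A i) (hv : v ∈ A j) :
    (π x < π y ↔ π u < π v) :=
  consec_sep (hA.interval i).2 (hA.interval j).2 (hA.img_disj hij)
    (img_mem hx) (img_mem hy) (img_mem hu) (img_mem hv)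

/-- index monotone w.r.t. position -/
lemma idx_le (hA : Blocks Y π C A) {i j : Fin m} {x y : Fin n}
    (hx : x ∈ A i) (hy : y ∈ A j) (hxy : x ≤ y) : i ≤ j := by
  by_contra h
  push_neg at h
  exact absurd (hA.ordered j i h y hy x hx) (not_lt.mpr hxy)

end Blocks

/-- `T` is a final segment of `C`. -/
def UpSeg (C T : Finset (Fin n)) : Prop :=
  T ⊆ C ∧ ∀ x ∈ C, x ∉ T → ∀ y ∈ T, x < y

lemma upseg_mem {C T : Finset (Fin n)} (hT : UpSeg C T) {x : Fin n} (hx : x ∈ C)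
    {y : Fin n} (hy : y ∈ T) (hxy : y ≤ x) : x ∈ T := by
  by_contra h
  exact absurd (hT.2 x hx h y hy) (not_lt.mpr hxy)

/-- the last block (the one containing `max' C`). -/
lemma blocks_last {m : ℕ} {A : Fin (m+1) → Finset (Fin n)} (hA : Blocks Y π C A) :
    UpSeg C (A (Fin.last m)) := by
  refine ⟨hA.subset _, fun x hx hxT y hy => ?_⟩
  obtain ⟨i, hi⟩ := hA.cover x hx
  have hilt : i < Fin.last m := by
    rcases lt_or_eq_of_le (Fin.le_last i) with h | h
    · exact h
    · exact absurd (h ▸ hi) hxT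
  exact hA.ordered i (Fin.last m) hilt x hi y hy

/-- an up-segment which is a block family member: all blocks before `s` avoid `T`,
    all after are inside, where `min' T ∈ B s`. -/
lemma blocks_before {k : ℕ} {B : Fin k → Finset (Fin n)} (hB : Blocks Y π C B)
    {T : Finset (Fin n)} (hT : UpSeg C T) (hTne : T.Nonempty) {s : Fin k}
    (hs : T.min' hTne ∈ B s) {j : Fin k} (hjs : j < s) :
    ∀ x ∈ B j, x ∉ T := by
  intro x hx hxT
  have h1 : x < T.min' hTne := hB.ordered j s hjs x hx _ hs
  exact absurd (Finset.min'_le _ _ hxT) (not_le.mpr h1)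

lemma blocks_after {k : ℕ} {B : Fin k → Finset (Fin n)} (hB : Blocks Y π C B)
    {T : Finset (Fin n)} (hT : UpSeg C T) (hTne : T.Nonempty) {s : Fin k}
    (hs : T.min' hTne ∈ B s) {j : Fin k} (hjs : s < j) :
    B j ⊆ T := by
  intro x hx
  have h1 : T.min' hTne < x := hB.ordered s j hjs _ hs x hx
  exact upseg_mem hT (hB.subset j hx) (Finset.min'_mem _ _) h1.le

/-- two up-segments are compared by their minima / are nested. -/
lemma upseg_eq {C T T' : Finset (Fin n)} (hT : UpSeg C T) (hT' : UpSeg C T')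
    (hTne : T.Nonempty) (hT'ne : T'.Nonempty)
    (h : T.min' hTne = T'.min' hT'ne) : T = T' := by
  have hmem' : T.min' hTne ∈ T' := h ▸ Finset.min'_mem T' hT'ne
  have hmem : T'.min' hT'ne ∈ T := h ▸ Finset.min'_mem T hTne
  apply Finset.Subset.antisymm
  · intro x hx
    exact upseg_mem hT' (hT.1 hx) hmem' (Finset.min'_le _ _ hx)
  · intro x hx
    exact upseg_mem hT (hT'.1 hx) hmem (h ▸ Finset.min'_le _ _ hx)

lemma upseg_ssub {C T T' : Finset (Fin n)} (hT : UpSeg C T) (hT' : UpSeg C T')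
    (hTne : T.Nonempty) (hT'ne : T'.Nonempty)
    (h : T.min' hTne < T'.min' hT'ne) : T' ⊂ T := by
  constructor
  · intro x hx
    exact upseg_mem hT (hT'.1 hx) (Finset.min'_mem _ _)
      ((Finset.min'_le _ _ hx).trans' h.le)
  · intro hc
    have := Finset.min'_le _ _ (hc (Finset.min'_mem T hTne))
    exact absurd this (not_le.mpr h)

end WreathAux
namespace WreathAux
open Finset
variable {n : ℕ}

/-- The strong embedding relation between two block families over `C`. -/
def Rel (π : Equiv.Perm (Fin n)) (C : Finset (Fin n)) {m k : ℕ}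
    (A : Fin m → Finset (Fin n)) (B : Fin k → Finset (Fin n)) : Prop :=
  ∃ g : Fin m → Fin k, StrictMono g ∧
    (∀ a b, a ≠ b → ∀ x ∈ A a, ∀ y ∈ A b, ∀ u ∈ B (g a), ∀ v ∈ B (g b),
      (π x < π y ↔ π u < π v)) ∧
    (∀ i, ∀ w : Fin n, w ∉ C.image π →
      ((∀ x ∈ A i, π x < w) ↔ (∀ u ∈ B (g i), π u < w)))

variable {Y : Set PermS} {π : Equiv.Perm (Fin n)} {C : Finset (Fin n)}
variable {m k : ℕ} {A : Fin m → Finset (Fin n)} {B : Fin k → Finset (Fin n)}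

/-- a block lies entirely on one side of an external value. -/
lemma block_side {s : Finset (Fin n)} (hs : IsInterval π s) {w : Fin n}
    (hw : w ∉ s.image π) {x : Fin n} (hx : x ∈ s) :
    (π x < w ↔ ∀ u ∈ s, π u < w) := by
  have h1 := consec_all_lt_iff hs.2 hw (img_mem hx)
  constructor
  · intro h u hu
    exact h1.mp h (π u) (img_mem hu)
  · intro h
    exact h x hx

lemma rel_of_meets (hA : Blocks Y π C A) (hB : Blocks Y π C B)
    (g : Fin m → Fin k) (hginj : Function.Injective g)
    (hmeet : ∀ i, ∃ x, x ∈ A i ∧ x ∈ B (g i)) : Rel π C A B := by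
  refine ⟨g, ?_, ?_, ?_⟩
  · intro i j hij
    obtain ⟨x, hxA, hxB⟩ := hmeet i
    obtain ⟨y, hyA, hyB⟩ := hmeet j
    have hxy : x < y := hA.ordered i j hij x hxA y hyA
    have : g i ≤ g j := hB.idx_le hxB hyB hxy.le
    exact lt_of_le_of_ne this (fun h => absurd (hginj h) hij.ne)
  · intro a b hab x hx y hy u hu v hv
    obtain ⟨p, hpA, hpB⟩ := hmeet a
    obtain ⟨q, hqA, hqB⟩ := hmeet b
    have hgab : g a ≠ g b := fun h => hab (hginj h)
    rw [hA.cross hab hx hy hpA hqA]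
    exact hB.cross hgab hpB hqB hu hv
  · intro i w hw
    obtain ⟨p, hpA, hpB⟩ := hmeet i
    have hwA : w ∉ (A i).image π := fun h => hw (Finset.image_subset_image (hA.subset i) h)
    have hwB : w ∉ (B (g i)).image π := fun h => hw (Finset.image_subset_image (hB.subset (g i)) h)
    rw [← block_side (hA.interval i) hwA hpA, ← block_side (hB.interval (g i)) hwB hpB]

lemma rel_trans {m' : ℕ} {A' : Fin m' → Finset (Fin n)}
    (hA'ne : ∀ i, (A' i).Nonempty)
    (h1 : Rel π C A A') (h2 : Rel π C A' B) : Rel π C A B := by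
  obtain ⟨g1, hg1, hc1, hs1⟩ := h1
  obtain ⟨g2, hg2, hc2, hs2⟩ := h2
  refine ⟨g2 ∘ g1, hg2.comp hg1, ?_, ?_⟩
  · intro a b hab x hx y hy u hu v hv
    obtain ⟨w, hw⟩ := hA'ne (g1 a)
    obtain ⟨z, hz⟩ := hA'ne (g1 b)
    have hab' : g1 a ≠ g1 b := fun h => hab (hg1.injective h)
    rw [hc1 a b hab x hx y hy w hw z hz]
    exact hc2 _ _ hab' w hw z hz u hu v hv
  · intro i w hw
    rw [hs1 i w hw]
    exact hs2 (g1 i) w hw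

end WreathAux
namespace WreathAux
open Finset
variable {n : ℕ} {Y : Set PermS} {π : Equiv.Perm (Fin n)} {C : Finset (Fin n)}

lemma lt_iff_of_gt_iff {α : Type*} [LinearOrder α] {a b c d : α}
    (h : b < a ↔ d < c) (h1 : a ≠ b) (h2 : c ≠ d) : (a < b ↔ c < d) := by
  rcases lt_or_gt_of_ne h1 with h3 | h3 <;> rcases lt_or_gt_of_ne h2 with h4 | h4
  · exact iff_of_true h3 h4
  · exact absurd (h.mpr h4) (not_lt.mpr h3.le)
  · exact absurd (h.mp h3) (not_lt.mpr h4.le)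
  · exact iff_of_false (not_lt.mpr h3.le) (not_lt.mpr h4.le)

lemma castPred_lt_castPred {m : ℕ} {i j : Fin (m+1)} (hi : i ≠ Fin.last m)
    (hj : j ≠ Fin.last m) (h : i < j) : i.castPred hi < j.castPred hj := by
  rwa [← Fin.castSucc_lt_castSucc_iff, Fin.castSucc_castPred, Fin.castSucc_castPred]

lemma glue {m₀ k t : ℕ} {A : Fin (m₀+1) → Finset (Fin n)} {B : Fin k → Finset (Fin n)}
    (hA : Blocks Y π C A) (hB : Blocks Y π C B)
    {emb : Fin t → Fin k} (hembmono : StrictMono emb)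
    (hembC : ∀ j, B (emb j) ⊆ C \ A (Fin.last m₀))
    (hrel : Rel π (C \ A (Fin.last m₀)) (Fin.init A) (fun j => B (emb j)))
    {jstar : Fin k} (hjs : B jstar ⊆ A (Fin.last m₀)) (hlt : ∀ j, emb j < jstar) :
    Rel π C A B := by
  classical
  obtain ⟨g', hg'mono, hg'cross, hg'side⟩ := hrel
  set T := A (Fin.last m₀) with hTdef
  set C' := C \ T with hC'def
  have hV : Consec (T.image π) := (hA.interval (Fin.last m₀)).2
  have hVsubC : T.image π ⊆ C.image π := Finset.image_subset_image (hA.subset _)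
  have hC'subC : C'.image π ⊆ C.image π := Finset.image_subset_image (Finset.sdiff_subset)
  have hinitsub : ∀ (i : Fin (m₀+1)) (h : i ≠ Fin.last m₀), A i ⊆ C' := by
    intro i h x hx
    rw [hC'def, Finset.mem_sdiff]
    exact ⟨hA.subset i hx, fun hxT => hA.disj i (Fin.last m₀) h x hx hxT⟩
  have hmemV : ∀ {x : Fin n}, x ∈ T → π x ∈ T.image π := fun hx => img_mem hx
  have hnotV : ∀ {x : Fin n}, x ∈ C' → π x ∉ T.image π := by
    intro x hx hc
    have := img_mem_iff.mp hc
    rw [hC'def, Finset.mem_sdiff] at hx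
    exact hx.2 this
  have hnotC'img : ∀ {x : Fin n}, x ∈ T → π x ∉ C'.image π := by
    intro x hx hc
    have := img_mem_iff.mp hc
    rw [hC'def, Finset.mem_sdiff] at this
    exact this.2 hx
  have hinit_eq : ∀ (i : Fin (m₀+1)) (h : i ≠ Fin.last m₀),
      Fin.init A (i.castPred h) = A i := by
    intro i h
    simp [Fin.init, Fin.castSucc_castPred]
  refine ⟨fun i => if h : i = Fin.last m₀ then jstar else emb (g' (i.castPred h)), ?_, ?_, ?_⟩
  · intro i j hij
    by_cases hj : j = Fin.last m₀
    · have hi : i ≠ Fin.last m₀ := Fin.ne_last_of_lt hij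
      simp only [dif_neg hi, dif_pos hj]
      exact hlt _
    · have hi : i ≠ Fin.last m₀ := Fin.ne_last_of_lt hij
      simp only [dif_neg hi, dif_neg hj]
      exact hembmono (hg'mono (castPred_lt_castPred hi hj hij))
  · intro a b hab x hx y hy u hu v hv
    by_cases ha : a = Fin.last m₀ <;> by_cases hb : b = Fin.last m₀
    · exact absurd (ha.trans hb.symm) hab
    · -- a is last: x,u ∈ T-side, y,v ∈ C'
      subst ha
      simp only [dif_pos rfl, dif_neg hb] at hu hv ⊢
      have hyC' : y ∈ C' := hinitsub b hb hy
      have hvC' : v ∈ C' := hembC _ hv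
      have hxV : π x ∈ T.image π := hmemV hx
      have huV : π u ∈ T.image π := hmemV (hjs hu)
      have step1 : π x < π y ↔ π u < π y := consec_lt_iff' hV (hnotV hyC') hxV huV
      have hwout : π u ∉ C'.image π := hnotC'img (hjs hu)
      have hside := hg'side (b.castPred hb) (π u) hwout
      rw [hinit_eq b hb] at hside
      have hb1 : π u ∉ (A b).image π := fun hc =>
        hnotV (hinitsub b hb (img_mem_iff.mp hc)) huV
      have hb2 : π u ∉ (B (emb (g' (b.castPred hb)))).image π := fun hc =>
        hnotV (hembC _ (img_mem_iff.mp hc)) huV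
      have step2 : π y < π u ↔ π v < π u := by
        rw [block_side (hA.interval b) hb1 hy, block_side (hB.interval _) hb2 hv]
        exact hside
      have hyne : π u ≠ π y := fun hc => hnotV hyC' (hc ▸ huV)
      have hvne : π u ≠ π v := fun hc => hnotV hvC' (hc ▸ huV)
      rw [step1]
      exact lt_iff_of_gt_iff step2 hyne hvne
    · -- b is last: x,u ∈ C', y,v ∈ T
      subst hb
      simp only [dif_pos rfl, dif_neg ha] at hu hv ⊢
      have hxC' : x ∈ C' := hinitsub a ha hx
      have huC' : u ∈ C' := hembC _ hu
      have hyV : π y ∈ T.image π := hmemV hy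
      have hvV : π v ∈ T.image π := hmemV (hjs hv)
      have hwout : π y ∉ C'.image π := hnotC'img hy
      have hside := hg'side (a.castPred ha) (π y) hwout
      rw [hinit_eq a ha] at hside
      have ha1 : π y ∉ (A a).image π := fun hc => hnotV (hinitsub a ha (img_mem_iff.mp hc)) hyV
      have ha2 : π y ∉ (B (emb (g' (a.castPred ha)))).image π := fun hc =>
        hnotV (hembC _ (img_mem_iff.mp hc)) hyV
      have step1 : π x < π y ↔ π u < π y := by
        rw [block_side (hA.interval a) ha1 hx, block_side (hB.interval _) ha2 hu]
        exact hside
      have step2 : π u < π y ↔ π u < π v := consec_lt_iff hV (hnotV huC') hyV hvV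
      rw [step1, step2]
    · -- neither last
      simp only [dif_neg ha, dif_neg hb] at hu hv ⊢
      have hne : a.castPred ha ≠ b.castPred hb := by
        intro hc
        exact hab (by rw [← Fin.castSucc_castPred a ha, ← Fin.castSucc_castPred b hb, hc])
      have := hg'cross (a.castPred ha) (b.castPred hb) hne
      rw [hinit_eq a ha, hinit_eq b hb] at this
      exact this x hx y hy u hu v hv
  · intro i w hw
    by_cases hi : i = Fin.last m₀
    · subst hi
      simp only [dif_pos rfl]
      constructor
      · intro h u hu
        exact h u (hjs hu)
      · intro h x hx
        obtain ⟨u₀, hu₀⟩ := hB.nonempty jstar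
        have hwV : w ∉ T.image π := fun hc => hw (hVsubC hc)
        exact (consec_lt_iff' hV hwV (hmemV hx) (hmemV (hjs hu₀))).mpr (h u₀ hu₀)
    · simp only [dif_neg hi]
      have := hg'side (i.castPred hi) w (fun hc => hw (hC'subC hc))
      rwa [hinit_eq i hi] at this

end WreathAux
namespace WreathAux
open Finset
variable {n : ℕ} {Y : Set PermS} {π : Equiv.Perm (Fin n)} {C : Finset (Fin n)}

lemma blocks_init {m₀ : ℕ} {A : Fin (m₀+1) → Finset (Fin n)} (hA : Blocks Y π C A) :
    Blocks Y π (C \ A (Fin.last m₀)) (Fin.init A) := by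
  have hinit : ∀ i : Fin m₀, Fin.init A i = A i.castSucc := fun i => rfl
  constructor
  · exact fun i => hA.nonempty _
  · exact fun i => hA.interval _
  · intro i x hx
    rw [Finset.mem_sdiff]
    exact ⟨hA.subset _ hx, fun hxT =>
      hA.disj i.castSucc (Fin.last m₀) (Fin.ne_last_of_lt (Fin.castSucc_lt_last i)) x hx hxT⟩
  · intro x hx
    rw [Finset.mem_sdiff] at hx
    obtain ⟨i, hi⟩ := hA.cover x hx.1
    have hne : i ≠ Fin.last m₀ := by rintro rfl; exact hx.2 hi
    exact ⟨i.castPred hne, by rw [hinit, Fin.castSucc_castPred]; exact hi⟩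
  · intro i j hij x hxi hxj
    exact hA.disj i.castSucc j.castSucc (fun h => hij (Fin.castSucc_injective _ h)) x hxi hxj
  · intro i j hij x hx y hy
    exact hA.ordered i.castSucc j.castSucc (by rwa [Fin.castSucc_lt_castSucc_iff]) x hx y hy
  · exact fun i => hA.ypat _

lemma blocks_snoc {m₀ : ℕ} {P : Fin m₀ → Finset (Fin n)} {T : Finset (Fin n)}
    (hT : UpSeg C T) (hTne : T.Nonempty) (hTint : IsInterval π T) (hTpat : YBlockPat Y π T)
    (hP : Blocks Y π (C \ T) P) :
    Blocks Y π C (Fin.snoc P T) := by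
  constructor
  · intro i
    induction i using Fin.lastCases with
    | last => rw [Fin.snoc_last]; exact hTne
    | cast j => rw [Fin.snoc_castSucc]; exact hP.nonempty j
  · intro i
    induction i using Fin.lastCases with
    | last => rw [Fin.snoc_last]; exact hTint
    | cast j => rw [Fin.snoc_castSucc]; exact hP.interval j
  · intro i
    induction i using Fin.lastCases with
    | last => rw [Fin.snoc_last]; exact hT.1
    | cast j => rw [Fin.snoc_castSucc]; exact (hP.subset j).trans Finset.sdiff_subset
  · intro x hx
    by_cases hxT : x ∈ T
    · exact ⟨Fin.last m₀, by rw [Fin.snoc_last]; exact hxT⟩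
    · obtain ⟨i, hi⟩ := hP.cover x (Finset.mem_sdiff.mpr ⟨hx, hxT⟩)
      exact ⟨i.castSucc, by rw [Fin.snoc_castSucc]; exact hi⟩
  · intro i j hij x hxi hxj
    induction i using Fin.lastCases with
    | last =>
      induction j using Fin.lastCases with
      | last => exact hij rfl
      | cast j' =>
        rw [Fin.snoc_last] at hxi
        rw [Fin.snoc_castSucc] at hxj
        exact (Finset.mem_sdiff.mp (hP.subset j' hxj)).2 hxi
    | cast i' =>
      induction j using Fin.lastCases with
      | last =>
        rw [Fin.snoc_last] at hxj
        rw [Fin.snoc_castSucc] at hxi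
        exact (Finset.mem_sdiff.mp (hP.subset i' hxi)).2 hxj
      | cast j' =>
        rw [Fin.snoc_castSucc] at hxi hxj
        exact hP.disj i' j' (fun h => hij (h ▸ rfl)) x hxi hxj
  · intro i j hij x hx y hy
    induction j using Fin.lastCases with
    | last =>
      have hine : i ≠ Fin.last m₀ := Fin.ne_last_of_lt hij
      rw [Fin.snoc_last] at hy
      rw [← Fin.castSucc_castPred i hine, Fin.snoc_castSucc] at hx
      have := Finset.mem_sdiff.mp (hP.subset _ hx)
      exact hT.2 x this.1 this.2 y hy
    | cast j' =>
      have hine : i ≠ Fin.last m₀ := Fin.ne_last_of_lt hij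
      rw [Fin.snoc_castSucc] at hy
      rw [← Fin.castSucc_castPred i hine, Fin.snoc_castSucc] at hx
      refine hP.ordered _ j' ?_ x hx y hy
      rw [← Fin.castSucc_lt_castSucc_iff, Fin.castSucc_castPred]
      exact hij
  · intro i
    induction i using Fin.lastCases with
    | last => rw [Fin.snoc_last]; exact hTpat
    | cast j => rw [Fin.snoc_castSucc]; exact hP.ypat j

end WreathAux
namespace WreathAux
open Finset
variable {n : ℕ} {Y : Set PermS} {π : Equiv.Perm (Fin n)} {C : Finset (Fin n)}

section Cuts

variable {k : ℕ} {B : Fin k → Finset (Fin n)} {T : Finset (Fin n)} {s : Fin k}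

/-- the prefix family: blocks strictly before `s`. -/
def preF (B : Fin k → Finset (Fin n)) (s : Fin k) : Fin s.val → Finset (Fin n) :=
  fun j => B ⟨j.1, j.2.trans s.2⟩

lemma blocks_preF (hB : Blocks Y π C B) (hT : UpSeg C T) (hTne : T.Nonempty)
    (hs : T.min' hTne ∈ B s) (hsub : B s ⊆ T) :
    Blocks Y π (C \ T) (preF B s) := by
  have hlt : ∀ j : Fin s.val, (⟨j.1, j.2.trans s.2⟩ : Fin k) < s := fun j => j.2
  constructor
  · exact fun j => hB.nonempty _
  · exact fun j => hB.interval _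
  · intro j x hx
    rw [Finset.mem_sdiff]
    exact ⟨hB.subset _ hx, blocks_before hB hT hTne hs (hlt j) x hx⟩
  · intro x hx
    rw [Finset.mem_sdiff] at hx
    obtain ⟨j, hj⟩ := hB.cover x hx.1
    have hjs : j < s := by
      rcases lt_trichotomy j s with h | h | h
      · exact h
      · rw [h] at hj
        exact absurd (hsub hj) hx.2
      · exact absurd (blocks_after hB hT hTne hs h hj) hx.2
    refine ⟨⟨j.1, hjs⟩, ?_⟩
    show x ∈ B ⟨j.1, Nat.lt_trans hjs s.2⟩
    rw [show (⟨j.1, Nat.lt_trans hjs s.2⟩ : Fin k) = j from Fin.ext rfl]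
    exact hj
  · intro i j hij x hxi hxj
    have hvalne : (i : ℕ) ≠ (j : ℕ) := fun hv => hij (Fin.ext hv)
    exact hB.disj ⟨i.1, Nat.lt_trans i.2 s.2⟩ ⟨j.1, Nat.lt_trans j.2 s.2⟩
      (fun h => hvalne (Fin.mk.inj_iff.mp h)) x hxi hxj
  · intro i j hij x hx y hy
    exact hB.ordered ⟨i.1, i.2.trans s.2⟩ ⟨j.1, j.2.trans s.2⟩ hij x hx y hy
  · exact fun j => hB.ypat _

/-- the two-piece replacement: prefix blocks then `T` (when `B s ⊆ T`). -/
def cut2F (B : Fin k → Finset (Fin n)) (s : Fin k) (T : Finset (Fin n)) :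
    Fin (s.val + 1) → Finset (Fin n) :=
  Fin.snoc (preF B s) T

lemma blocks_cut2F (hB : Blocks Y π C B) (hT : UpSeg C T) (hTne : T.Nonempty)
    (hTint : IsInterval π T) (hTpat : YBlockPat Y π T)
    (hs : T.min' hTne ∈ B s) (hsub : B s ⊆ T) :
    Blocks Y π C (cut2F B s T) :=
  blocks_snoc hT hTne hTint hTpat (blocks_preF hB hT hTne hs hsub)

/-- the three-piece replacement: prefix blocks, `B s \ T`, then `T` (when `B s ⊄ T`). -/
def cut3F (B : Fin k → Finset (Fin n)) (s : Fin k) (T : Finset (Fin n)) :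
    Fin (s.val + 1 + 1) → Finset (Fin n) :=
  Fin.snoc (Fin.snoc (preF B s) (B s \ T)) T

lemma blocks_cut3F (hY : IsPermClass Y) (hB : Blocks Y π C B) (hT : UpSeg C T)
    (hTne : T.Nonempty) (hTint : IsInterval π T) (hTpat : YBlockPat Y π T)
    (hs : T.min' hTne ∈ B s) (hnsub : ¬ B s ⊆ T) (hnsub2 : ∃ z ∈ T, z ∉ B s) :
    Blocks Y π C (cut3F B s T) := by
  refine blocks_snoc hT hTne hTint hTpat ?_
  -- remains: Blocks Y π (C \ T) (snoc (preF B s) (B s \ T))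
  have hint : IsInterval π (B s \ T) :=
    interval_sdiff (hB.interval s) hTint ⟨_, Finset.mem_inter.mpr ⟨hs, Finset.min'_mem _ _⟩⟩ hnsub2
  have hne : (B s \ T).Nonempty := by
    obtain ⟨z, hz1, hz2⟩ := Finset.not_subset.mp hnsub
    exact ⟨z, Finset.mem_sdiff.mpr ⟨hz1, hz2⟩⟩
  have hpat : YBlockPat Y π (B s \ T) := ypat_subset hY Finset.sdiff_subset (hB.ypat s)
  -- (B s \ T) is an up-segment of C \ T? No: we directly build Blocks.
  constructor
  · intro i
    induction i using Fin.lastCases with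
    | last => rw [Fin.snoc_last]; exact hne
    | cast j => rw [Fin.snoc_castSucc]; exact hB.nonempty _
  · intro i
    induction i using Fin.lastCases with
    | last => rw [Fin.snoc_last]; exact hint
    | cast j => rw [Fin.snoc_castSucc]; exact hB.interval _
  · intro i
    induction i using Fin.lastCases with
    | last =>
      rw [Fin.snoc_last]
      intro x hx
      rw [Finset.mem_sdiff] at hx ⊢
      exact ⟨hB.subset s hx.1, hx.2⟩
    | cast j =>
      rw [Fin.snoc_castSucc]
      intro x hx
      rw [Finset.mem_sdiff]
      exact ⟨hB.subset _ hx, blocks_before hB hT hTne hs j.2 x hx⟩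
  · intro x hx
    rw [Finset.mem_sdiff] at hx
    obtain ⟨j, hj⟩ := hB.cover x hx.1
    rcases lt_trichotomy j s with h | h | h
    · refine ⟨Fin.castSucc ⟨j.1, h⟩, ?_⟩
      rw [Fin.snoc_castSucc]
      show x ∈ B ⟨j.1, Nat.lt_trans h s.2⟩
      rw [show (⟨j.1, Nat.lt_trans h s.2⟩ : Fin k) = j from Fin.ext rfl]
      exact hj
    · refine ⟨Fin.last _, ?_⟩
      rw [Fin.snoc_last, Finset.mem_sdiff]
      rw [h] at hj
      exact ⟨hj, hx.2⟩
    · exact absurd (blocks_after hB hT hTne hs h hj) hx.2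
  · intro i j hij x hxi hxj
    induction i using Fin.lastCases with
    | last =>
      induction j using Fin.lastCases with
      | last => exact hij rfl
      | cast j' =>
        rw [Fin.snoc_last, Finset.mem_sdiff] at hxi
        rw [Fin.snoc_castSucc] at hxj
        exact hB.disj s _ (fun h => absurd (congrArg Fin.val h).symm (Nat.ne_of_lt j'.2)) x hxi.1 hxj
    | cast i' =>
      induction j using Fin.lastCases with
      | last =>
        rw [Fin.snoc_last, Finset.mem_sdiff] at hxj
        rw [Fin.snoc_castSucc] at hxi
        exact hB.disj _ s (fun h => absurd (congrArg Fin.val h) (Nat.ne_of_lt i'.2)) x hxi hxj.1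
      | cast j' =>
        rw [Fin.snoc_castSucc] at hxi hxj
        have hvalne : (i' : ℕ) ≠ (j' : ℕ) := fun hv => hij (congrArg Fin.castSucc (Fin.ext hv))
        exact hB.disj ⟨i'.1, Nat.lt_trans i'.2 s.2⟩ ⟨j'.1, Nat.lt_trans j'.2 s.2⟩
          (fun h => hvalne (Fin.mk.inj_iff.mp h)) x hxi hxj
  · intro i j hij x hx y hy
    induction j using Fin.lastCases with
    | last =>
      have hine : i ≠ Fin.last _ := Fin.ne_last_of_lt hij
      rw [Fin.snoc_last, Finset.mem_sdiff] at hy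
      rw [← Fin.castSucc_castPred i hine, Fin.snoc_castSucc] at hx
      exact hB.ordered ⟨(i.castPred hine).1, Nat.lt_trans (i.castPred hine).2 s.2⟩ s
        (i.castPred hine).2 x hx y hy.1
    | cast j' =>
      have hine : i ≠ Fin.last _ := Fin.ne_last_of_lt hij
      rw [Fin.snoc_castSucc] at hy
      rw [← Fin.castSucc_castPred i hine, Fin.snoc_castSucc] at hx
      refine hB.ordered ⟨(i.castPred hine).1, Nat.lt_trans (i.castPred hine).2 s.2⟩
        ⟨j'.1, Nat.lt_trans j'.2 s.2⟩ ?_ x hx y hy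
      show ((i.castPred hine) : ℕ) < (j' : ℕ)
      have h2 := hij
      rw [← Fin.castSucc_castPred i hine, Fin.castSucc_lt_castSucc_iff] at h2
      exact h2
  · intro i
    induction i using Fin.lastCases with
    | last => rw [Fin.snoc_last]; exact hpat
    | cast j => rw [Fin.snoc_castSucc]; exact hB.ypat _

end Cuts
end WreathAux
namespace WreathAux
open Finset
variable {n : ℕ} {Y : Set PermS} {π : Equiv.Perm (Fin n)} {C : Finset (Fin n)}

section Acc
variable {k : ℕ} {B : Fin k → Finset (Fin n)} {T : Finset (Fin n)} {s : Fin k}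

lemma cut3F_lt (iv : ℕ) (h : iv < s.val) (hiv : iv < s.val+1+1) (hk : iv < k) :
    cut3F B s T ⟨iv, hiv⟩ = B ⟨iv, hk⟩ := by
  have h2 : (⟨iv, hiv⟩ : Fin (s.val+1+1)) = Fin.castSucc (Fin.castSucc ⟨iv, h⟩) := Fin.ext rfl
  rw [h2, cut3F, Fin.snoc_castSucc, Fin.snoc_castSucc]
  show B ⟨iv, _⟩ = B ⟨iv, hk⟩
  congr 1

lemma cut3F_eq (hv : s.val < s.val+1+1) :
    cut3F B s T ⟨s.val, hv⟩ = B s \ T := by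
  have h2 : (⟨s.val, hv⟩ : Fin (s.val+1+1)) = Fin.castSucc (Fin.last s.val) := Fin.ext rfl
  rw [h2, cut3F, Fin.snoc_castSucc, Fin.snoc_last]

lemma cut3F_last : cut3F B s T (Fin.last (s.val+1)) = T := Fin.snoc_last _ _

end Acc

lemma rel_zero {k : ℕ} {A : Fin 0 → Finset (Fin n)} {B : Fin k → Finset (Fin n)} :
    Rel π C A B :=
  ⟨Fin.elim0, fun a => a.elim0, fun a => a.elim0, fun i => i.elim0⟩

lemma min_init {m₀ : ℕ} {A : Fin (m₀+1) → Finset (Fin n)} (hA : Blocks Y π C A)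
    (hmin : ∀ (m' : ℕ) (P : Fin m' → Finset (Fin n)), Blocks Y π C P → m₀+1 ≤ m') :
    ∀ (m' : ℕ) (P : Fin m' → Finset (Fin n)),
      Blocks Y π (C \ A (Fin.last m₀)) P → m₀ ≤ m' := by
  intro m' P hP
  have h2 := hmin (m'+1) (Fin.snoc P (A (Fin.last m₀)))
    (blocks_snoc (blocks_last hA) (hA.nonempty _) (hA.interval _) (hA.ypat _) hP)
  omega

/-- the induction predicate. -/
def SDR (Y : Set PermS) (π : Equiv.Perm (Fin n)) (c : ℕ) : Prop :=
  ∀ (C : Finset (Fin n)), C.card ≤ c →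
    ∀ (m : ℕ) (A : Fin m → Finset (Fin n)), Blocks Y π C A →
      (∀ (m' : ℕ) (P : Fin m' → Finset (Fin n)), Blocks Y π C P → m ≤ m') →
      ∀ (k : ℕ) (B : Fin k → Finset (Fin n)), Blocks Y π C B → Rel π C A B

/-- the recursion step when the two partitions share their last block. -/
lemma eq_last {c : ℕ} (ih : SDR Y π c) {m₀ k₀ : ℕ} (hcard : C.card ≤ c + 1)
    {A : Fin (m₀+1) → Finset (Fin n)} {B : Fin (k₀+1) → Finset (Fin n)}
    (hA : Blocks Y π C A)
    (hmin : ∀ (m' : ℕ) (P : Fin m' → Finset (Fin n)), Blocks Y π C P → m₀+1 ≤ m')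
    (hB : Blocks Y π C B) (hEq : A (Fin.last m₀) = B (Fin.last k₀)) :
    Rel π C A B := by
  set T := A (Fin.last m₀) with hT
  have hup : UpSeg C T := blocks_last hA
  have hTne : T.Nonempty := hA.nonempty _
  have hcard' : (C \ T).card ≤ c := by
    have h1 : (C \ T).card = C.card - T.card := Finset.card_sdiff_of_subset hup.1
    have h2 : 1 ≤ T.card := Finset.card_pos.mpr hTne
    have h3 : T.card ≤ C.card := Finset.card_le_card hup.1
    omega
  have hA0 : Blocks Y π (C \ T) (Fin.init A) := blocks_init hA
  have hB0 : Blocks Y π (C \ T) (Fin.init B) := by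
    have := blocks_init hB
    rwa [← hEq] at this
  have hrel : Rel π (C \ T) (Fin.init A) (Fin.init B) :=
    ih (C \ T) hcard' m₀ (Fin.init A) hA0 (min_init hA hmin) k₀ (Fin.init B) hB0
  refine glue hA hB (Fin.strictMono_castSucc) ?_ hrel (jstar := Fin.last k₀) ?_ ?_
  · intro j
    have := hB0.subset j
    exact this
  · rw [← hEq]
  · intro j
    exact Fin.castSucc_lt_last j

end WreathAux
namespace WreathAux
open Finset
variable {n : ℕ} {Y : Set PermS} {π : Equiv.Perm (Fin n)} {C : Finset (Fin n)}

lemma card_sdiff_le {c : ℕ} {T : Finset (Fin n)} (hsub : T ⊆ C) (hne : T.Nonempty)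
    (h : C.card ≤ c + 1) : (C \ T).card ≤ c := by
  have h1 : (C \ T).card = C.card - T.card := Finset.card_sdiff_of_subset hsub
  have h2 : 1 ≤ T.card := Finset.card_pos.mpr hne
  have h3 : T.card ≤ C.card := Finset.card_le_card hsub
  omega

lemma sdr_zero : SDR Y π (n := n) 0 := by
  intro C hcard m A hA hmin k B hB
  cases m with
  | zero => exact rel_zero
  | succ m₀ =>
    obtain ⟨x, hx⟩ := hA.nonempty 0
    have hC : C = ∅ := Finset.card_eq_zero.mp (Nat.le_antisymm hcard (Nat.zero_le _))
    exact absurd (hA.subset 0 hx) (by rw [hC]; exact Finset.notMem_empty x)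

lemma sdr_succ (hY : IsPermClass Y) {c : ℕ} (ih : SDR Y π (n := n) c) :
    SDR Y π (n := n) (c+1) := by
  intro C hcard m A hA hmin k B hB
  cases m with
  | zero => exact rel_zero
  | succ m₀ =>
  cases k with
  | zero =>
    obtain ⟨x, hx⟩ := hA.nonempty 0
    obtain ⟨j, _⟩ := hB.cover x (hA.subset 0 hx)
    exact j.elim0
  | succ k₀ =>
  have hupA : UpSeg C (A (Fin.last m₀)) := blocks_last hA
  have hupB : UpSeg C (B (Fin.last k₀)) := blocks_last hB
  have hTAne : (A (Fin.last m₀)).Nonempty := hA.nonempty _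
  have hTBne : (B (Fin.last k₀)).Nonempty := hB.nonempty _
  rcases lt_trichotomy ((A (Fin.last m₀)).min' hTAne) ((B (Fin.last k₀)).min' hTBne)
    with hlt | heq | hgt
  · -- case (iii): B's last block is strictly inside A's last block
    have hsub : B (Fin.last k₀) ⊂ A (Fin.last m₀) := upseg_ssub hupA hupB hTAne hTBne hlt
    obtain ⟨s, hs⟩ := hB.cover ((A (Fin.last m₀)).min' hTAne) (hupA.1 (Finset.min'_mem _ _))
    by_cases hss : B s ⊆ A (Fin.last m₀)
    · -- direct glue with the prefix of B
      have hA0 : Blocks Y π (C \ A (Fin.last m₀)) (Fin.init A) := blocks_init hA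
      have hB0 : Blocks Y π (C \ A (Fin.last m₀)) (preF B s) :=
        blocks_preF hB hupA hTAne hs hss
      have hrel := ih (C \ A (Fin.last m₀)) (card_sdiff_le hupA.1 hTAne hcard)
        m₀ (Fin.init A) hA0 (min_init hA hmin) s.val (preF B s) hB0
      refine glue hA hB (emb := fun j => ⟨j.1, Nat.lt_trans j.2 s.2⟩) ?_ ?_ hrel
        (jstar := Fin.last k₀) hsub.1 ?_
      · intro a b hab
        exact hab
      · intro j
        exact hB0.subset j
      · intro j
        show (j : ℕ) < k₀
        have h1 : s.val ≤ k₀ := Nat.lt_succ_iff.mp s.2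
        have h2 : (j : ℕ) < s.val := j.2
        omega
    · -- restructure B with cut3F, then use eq_last and rel_of_meets
      have hsne : s ≠ Fin.last k₀ := by
        rintro rfl
        exact hss hsub.1
      have hnsub2 : ∃ z ∈ A (Fin.last m₀), z ∉ B s := by
        by_contra h
        push_neg at h
        obtain ⟨x, hx⟩ := hTBne
        have hx2 : x ∈ B s := h x (hsub.1 hx)
        exact hB.disj s (Fin.last k₀) hsne x hx2 hx
      have hB' : Blocks Y π C (cut3F B s (A (Fin.last m₀))) :=
        blocks_cut3F hY hB hupA hTAne (hA.interval _) (hA.ypat _) hs hss hnsub2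
      have h1 : Rel π C A (cut3F B s (A (Fin.last m₀))) :=
        eq_last ih hcard hA hmin hB' (by rw [cut3F_last])
      have hsvallt : s.val < k₀ := by
        have h1 : s.val ≤ k₀ := Nat.lt_succ_iff.mp s.2
        have h2 : s.val ≠ k₀ := fun h => hsne (Fin.ext h)
        omega
      have h2 : Rel π C (cut3F B s (A (Fin.last m₀))) B := by
        refine rel_of_meets hB' hB
          (fun i => if h : i.val < s.val then ⟨i.1, Nat.lt_trans h s.2⟩
            else if h2 : i.val = s.val then s else Fin.last k₀) ?_ ?_
        · intro a b hab
          have h2 := congrArg Fin.val hab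
          have ha2 := a.2
          have hb2 := b.2
          apply Fin.ext
          dsimp only at h2
          split_ifs at h2 <;> simp only [Fin.val_last] at h2 <;> omega
        · intro i
          by_cases h : i.val < s.val
          · obtain ⟨x, hx⟩ := hB.nonempty ⟨i.1, Nat.lt_trans h s.2⟩
            refine ⟨x, ?_, ?_⟩
            · rw [show i = (⟨i.1, i.2⟩ : Fin (s.val+1+1)) from Fin.ext rfl,
                cut3F_lt i.1 h i.2 (Nat.lt_trans h s.2)]
              exact hx
            · simp only [dif_pos h]
              exact hx
          · by_cases h2 : i.val = s.val
            · obtain ⟨x, hx⟩ := Finset.not_subset.mp hss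
              refine ⟨x, ?_, ?_⟩
              · rw [show i = (⟨s.val, (by omega : s.val < s.val+1+1)⟩ : Fin (s.val+1+1))
                    from Fin.ext h2, cut3F_eq]
                exact Finset.mem_sdiff.mpr ⟨hx.1, hx.2⟩
              · simp only [dif_neg h, dif_pos h2]
                exact hx.1
            · obtain ⟨x, hx⟩ := hTBne
              have hival : i.val = s.val + 1 := by have := i.2; omega
              refine ⟨x, ?_, ?_⟩
              · rw [show i = Fin.last (s.val+1) from Fin.ext (by simpa using hival),
                  cut3F_last]
                exact hsub.1 hx
              · simp only [dif_neg h, dif_neg h2]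
                exact hx
      exact rel_trans hB'.nonempty h1 h2
  · exact eq_last ih hcard hA hmin hB (upseg_eq hupA hupB hTAne hTBne heq)
  · -- case (ii): A's last block is strictly inside B's last block
    have hsub : A (Fin.last m₀) ⊂ B (Fin.last k₀) := upseg_ssub hupB hupA hTBne hTAne hgt
    obtain ⟨s, hs⟩ := hA.cover ((B (Fin.last k₀)).min' hTBne) (hupB.1 (Finset.min'_mem _ _))
    have hsne : s ≠ Fin.last m₀ := by
      rintro rfl
      exact absurd (Finset.min'_le _ _ hs) (not_le.mpr hgt)
    have hsvallt : s.val < m₀ := by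
      have h1 : s.val ≤ m₀ := Nat.lt_succ_iff.mp s.2
      have h2 : s.val ≠ m₀ := fun h => hsne (Fin.ext h)
      omega
    by_cases hss : A s ⊆ B (Fin.last k₀)
    · -- contradiction with minimality via cut2F
      have hA'' : Blocks Y π C (cut2F A s (B (Fin.last k₀))) :=
        blocks_cut2F hA hupB hTBne (hB.interval _) (hB.ypat _) hs hss
      have := hmin (s.val+1) _ hA''
      omega
    · have hnsub2 : ∃ z ∈ B (Fin.last k₀), z ∉ A s := by
        by_contra h
        push_neg at h
        obtain ⟨x, hx⟩ := hTAne
        have hx2 : x ∈ A s := h x (hsub.1 hx)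
        exact hA.disj s (Fin.last m₀) hsne x hx2 hx
      have hA' : Blocks Y π C (cut3F A s (B (Fin.last k₀))) :=
        blocks_cut3F hY hA hupB hTBne (hB.interval _) (hB.ypat _) hs hss hnsub2
      have hm0 : m₀ = s.val + 1 := by
        have := hmin (s.val+1+1) _ hA'
        omega
      have hmin' : ∀ (m' : ℕ) (P : Fin m' → Finset (Fin n)), Blocks Y π C P →
          s.val+1+1 ≤ m' := by
        intro m' P hP
        have := hmin m' P hP
        omega
      have h1 : Rel π C A (cut3F A s (B (Fin.last k₀))) := by
        refine rel_of_meets hA hA'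
          (fun i => if h : i.val < s.val then ⟨i.1, by omega⟩
            else if h2 : i.val = s.val then ⟨s.val, by omega⟩ else Fin.last (s.val+1)) ?_ ?_
        · intro a b hab
          have h2 := congrArg Fin.val hab
          have ha2 := a.2
          have hb2 := b.2
          apply Fin.ext
          dsimp only at h2
          split_ifs at h2 <;> simp only [Fin.val_last] at h2 <;> omega
        · intro i
          by_cases h : i.val < s.val
          · obtain ⟨x, hx⟩ := hA.nonempty i
            refine ⟨x, hx, ?_⟩
            simp only [dif_pos h]
            rw [cut3F_lt i.1 h (by omega) (by omega)]
            have : (⟨i.1, by omega⟩ : Fin (m₀+1)) = i := Fin.ext rfl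
            rw [this]
            exact hx
          · by_cases h2 : i.val = s.val
            · obtain ⟨x, hx⟩ := Finset.not_subset.mp hss
              have hieq : i = s := Fin.ext h2
              refine ⟨x, hieq ▸ hx.1, ?_⟩
              simp only [dif_neg h, dif_pos h2]
              rw [cut3F_eq]
              exact Finset.mem_sdiff.mpr ⟨hx.1, hx.2⟩
            · obtain ⟨x, hx⟩ := hTAne
              have hival : i.val = m₀ := by have := i.2; omega
              have hieq : i = Fin.last m₀ := Fin.ext (by simpa using hival)
              refine ⟨x, hieq ▸ hx, ?_⟩
              simp only [dif_neg h, dif_neg h2]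
              rw [cut3F_last]
              exact hsub.1 hx
      have h2 : Rel π C (cut3F A s (B (Fin.last k₀))) B :=
        eq_last ih hcard hA' hmin' hB (by rw [cut3F_last])
      exact rel_trans hA'.nonempty h1 h2

theorem sdr_all (hY : IsPermClass Y) : ∀ c : ℕ, SDR Y π (n := n) c := by
  intro c
  induction c with
  | zero => exact sdr_zero
  | succ c ih => exact sdr_succ hY ih

end WreathAux
namespace WreathAux
open Finset
variable {n : ℕ} {Y : Set PermS} {π : Equiv.Perm (Fin n)}

lemma blocks_of_infl {m : ℕ} {σ : Equiv.Perm (Fin m)} {A : Fin m → Finset (Fin n)}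
    (h : IsInflation π σ A)
    (hpat : ∀ i, ∃ (k : ℕ) (α : Equiv.Perm (Fin k)), (⟨k, α⟩ : PermS) ∈ Y ∧
      IsPatternOf α π (A i)) :
    Blocks Y π Finset.univ A := by
  obtain ⟨h1, h2, h3, h4, h5⟩ := h
  constructor
  · exact h1
  · exact h2
  · exact fun i => Finset.subset_univ _
  · exact fun x _ => ⟨(h3 x).choose, (h3 x).choose_spec.1⟩
  · intro i j hij x hxi hxj
    obtain ⟨w, hw1, hw2⟩ := h3 x
    exact hij ((hw2 i hxi).trans (hw2 j hxj).symm)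
  · exact h4
  · exact hpat

lemma exists_quot {m : ℕ} {A : Fin m → Finset (Fin n)} (hA : Blocks Y π Finset.univ A) :
    ∃ σ : Equiv.Perm (Fin m), IsInflation π σ A := by
  classical
  have himg : ∀ i, ((A i).image π).Nonempty := fun i => (hA.nonempty i).image _
  set key : Fin m → Fin n := fun i => ((A i).image π).min' (himg i) with hkey
  have hkeymem : ∀ i, key i ∈ (A i).image π := fun i => Finset.min'_mem _ _
  have hkeyinj : Function.Injective key := by
    intro i j hij
    by_contra hne
    exact hA.img_disj hne (key i) (hkeymem i) (hij ▸ hkeymem j)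
  have hcard : (Finset.univ.image key).card = m := by
    rw [Finset.card_image_of_injective _ hkeyinj, Finset.card_univ, Fintype.card_fin]
  let e := (Finset.univ.image key).orderIsoOfFin hcard
  have hmem : ∀ i, key i ∈ Finset.univ.image key :=
    fun i => Finset.mem_image_of_mem _ (Finset.mem_univ i)
  have hinj : Function.Injective (fun i => e.symm ⟨key i, hmem i⟩) := by
    intro i j hij
    exact hkeyinj (congrArg Subtype.val (e.symm.injective hij))
  obtain ⟨σ, hσ⟩ : ∃ σ : Equiv.Perm (Fin m), ∀ i, σ i = e.symm ⟨key i, hmem i⟩ :=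
    ⟨Equiv.ofBijective _ ((Finite.injective_iff_bijective).mp hinj), fun _ => rfl⟩
  have hkeylt : ∀ i j, σ i < σ j ↔ key i < key j := by
    intro i j
    rw [hσ, hσ]
    exact e.symm.lt_iff_lt
  refine ⟨σ, hA.nonempty, hA.interval, ?_, hA.ordered, ?_⟩
  · intro x
    obtain ⟨i, hi⟩ := hA.cover x (Finset.mem_univ x)
    exact ⟨i, hi, fun j hj => by
      by_contra hne
      exact hA.disj j i hne x hj hi⟩
  · intro i j hij x hx y hy
    obtain ⟨xi, hxi, hxieq⟩ := Finset.mem_image.mp (hkeymem i)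
    obtain ⟨xj, hxj, hxjeq⟩ := Finset.mem_image.mp (hkeymem j)
    rw [hkeylt, ← hxieq, ← hxjeq]
    exact hA.cross hij hxi hxj hx hy

end WreathAux
/-- `π ∈ X ≀ Y` if and only if the `Y`-profile `π^Y` of `π` lies in `X`. -/
theorem mem_wreath_iff_profile (X Y : Set PermS) (hX : IsPermClass X) (hY : IsPermClass Y)
    (h1 : (⟨1, 1⟩ : PermS) ∈ Y) {n m : ℕ} (π : Equiv.Perm (Fin n))
    (πY : Equiv.Perm (Fin m)) (hdef : IsYDeflation Y πY π)
    (hmin : ∀ q : PermS, IsYDeflation Y q.2 π → m ≤ q.1) :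
    InWreath X Y π ↔ (⟨m, πY⟩ : PermS) ∈ X := by
  constructor
  · rintro ⟨k, σ, hσX, Bbl, hinflB, hpatB⟩
    obtain ⟨Abl, hinflA, hpatA⟩ := hdef
    have hAB : WreathAux.Blocks Y π Finset.univ Abl := WreathAux.blocks_of_infl hinflA hpatA
    have hBB : WreathAux.Blocks Y π Finset.univ Bbl := WreathAux.blocks_of_infl hinflB hpatB
    have hminA : ∀ (m' : ℕ) (P : Fin m' → Finset (Fin n)),
        WreathAux.Blocks Y π Finset.univ P → m ≤ m' := by
      intro m' P hP
      obtain ⟨σ', hσ'⟩ := WreathAux.exists_quot hP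
      exact hmin ⟨m', σ'⟩ ⟨P, hσ', hP.ypat⟩
    have hcard : (Finset.univ : Finset (Fin n)).card ≤ n := by simp
    obtain ⟨g, hgmono, hcross, -⟩ :=
      WreathAux.sdr_all (π := π) hY n Finset.univ hcard m Abl hAB hminA k Bbl hBB
    refine hX ⟨m, πY⟩ ⟨k, σ⟩ ⟨g, hgmono, ?_⟩ hσX
    intro a b
    by_cases hab : a = b
    · subst hab
      simp
    · obtain ⟨x, hx⟩ := hAB.nonempty a
      obtain ⟨y, hy⟩ := hAB.nonempty b
      obtain ⟨u, hu⟩ := hBB.nonempty (g a)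
      obtain ⟨v, hv⟩ := hBB.nonempty (g b)
      have e1 := hinflA.2.2.2.2 a b hab x hx y hy
      have e2 := hcross a b hab x hx y hy u hu v hv
      have e3 := hinflB.2.2.2.2 (g a) (g b) (fun h => hab (hgmono.injective h)) u hu v hv
      rw [e1, e2, ← e3]
  · intro hmem
    exact ⟨m, πY, hmem, hdef⟩
end

section
/- If π is a permutation with π ∉ Y for a permutation class Y containing 1, and σ is the skeleton of π (the unique simple permutation such that π is an inflation of σ), then σ is involved in the Y-profile π^Y. -/
/-- Key structural lemma: if `π` is an inflation of a simple permutation `σ` of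
length at least 3, then any proper interval of `π` meets at most one block. -/
lemma interval_sub_block {n m : ℕ} (hm : 3 ≤ m) (π : Equiv.Perm (Fin n))
    (σ : Equiv.Perm (Fin m)) (hσ : IsSimple σ) (B : Fin m → Finset (Fin n))
    (hinf : IsInflation π σ B) {S : Finset (Fin n)} (hS : IsInterval π S)
    (hSne : S ≠ Finset.univ) {i j : Fin m} {x y : Fin n}
    (hx : x ∈ S) (hxi : x ∈ B i) (hy : y ∈ S) (hyj : y ∈ B j) : i = j := by
  classical
  by_contra hij
  obtain ⟨hBne, hBint, hBuniq, hBord, hBval⟩ := hinf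
  set I : Finset (Fin m) := Finset.univ.filter (fun l => ∃ z ∈ B l, z ∈ S) with hIdef
  have hmemI : ∀ l : Fin m, l ∈ I ↔ ∃ z ∈ B l, z ∈ S := by
    intro l; simp [hIdef]
  have hiI : i ∈ I := (hmemI i).mpr ⟨x, hxi, hx⟩
  have hjI : j ∈ I := (hmemI j).mpr ⟨y, hyj, hy⟩
  have hordlt : ∀ {a b : Fin m} {u v : Fin n}, u ∈ B a → v ∈ B b → a < b → u < v :=
    fun {a b u v} hu hv hab => hBord a b hab u hu v hv
  have hIconsec : Consec I := by
    intro a b c ha hc hab hbc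
    obtain ⟨xa, hxa, hxaS⟩ := (hmemI a).mp ha
    obtain ⟨xc, hxc, hxcS⟩ := (hmemI c).mp hc
    rcases eq_or_lt_of_le hab with rfl | hab'
    · exact ha
    rcases eq_or_lt_of_le hbc with rfl | hbc'
    · exact hc
    obtain ⟨z, hz⟩ := hBne b
    have h1 : xa < z := hordlt hxa hz hab'
    have h2 : z < xc := hordlt hz hxc hbc'
    exact (hmemI b).mpr ⟨z, hz, hS.1 hxaS hxcS h1.le h2.le⟩
  have hIimg : Consec (I.image σ) := by
    intro a b c ha hc hab hbc
    obtain ⟨la, hla, hla'⟩ := Finset.mem_image.mp ha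
    obtain ⟨lc, hlc, hlc'⟩ := Finset.mem_image.mp hc
    rcases eq_or_lt_of_le hab with heq | hab'
    · rw [← heq]; exact ha
    rcases eq_or_lt_of_le hbc with heq | hbc'
    · rw [heq]; exact hc
    set l := σ.symm b with hldef
    have hσl : σ l = b := σ.apply_symm_apply b
    obtain ⟨xa, hxa, hxaS⟩ := (hmemI la).mp hla
    obtain ⟨xc, hxc, hxcS⟩ := (hmemI lc).mp hlc
    obtain ⟨z, hz⟩ := hBne l
    have hla_ne : la ≠ l := fun h => by
      rw [← h, hla'] at hσl; rw [hσl] at hab'; exact lt_irrefl _ hab'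
    have hlc_ne : lc ≠ l := fun h => by
      rw [← h, hlc'] at hσl; rw [hσl] at hbc'; exact lt_irrefl _ hbc'
    have h1 : π xa < π z := (hBval la l hla_ne xa hxa z hz).mp (by rw [hσl, hla']; exact hab')
    have h2 : π z < π xc := (hBval l lc hlc_ne.symm z hz xc hxc).mp (by rw [hσl, hlc']; exact hbc')
    have hmem : π z ∈ S.image π :=
      hS.2 (Finset.mem_image_of_mem π hxaS) (Finset.mem_image_of_mem π hxcS) h1.le h2.le
    obtain ⟨w, hwS, hw⟩ := Finset.mem_image.mp hmem
    have hwz : w = z := π.injective hw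
    subst hwz
    have : l ∈ I := (hmemI l).mpr ⟨w, hz, hwS⟩
    rw [← hσl]
    exact Finset.mem_image_of_mem σ this
  have hIcard : 1 < I.card := Finset.one_lt_card.mpr ⟨i, hiI, j, hjI, hij⟩
  have hIuniv : I = Finset.univ := by
    rcases hσ I ⟨hIconsec, hIimg⟩ with h | h
    · omega
    · exact h
  have hall : ∀ l : Fin m, ∃ z ∈ B l, z ∈ S := fun l =>
    (hmemI l).mp (hIuniv ▸ Finset.mem_univ l)
  obtain ⟨w, hwS⟩ : ∃ w, w ∉ S := by
    by_contra h
    push_neg at h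
    exact hSne (Finset.eq_univ_iff_forall.mpr h)
  obtain ⟨p, hwp, -⟩ := hBuniq w
  have hm0 : 0 < m := by omega
  set bot : Fin m := ⟨0, hm0⟩ with hbotdef
  set top : Fin m := ⟨m - 1, by omega⟩ with htopdef
  have hbot_le : ∀ a : Fin m, bot ≤ a := fun a => by
    simp only [hbotdef, Fin.le_def]; omega
  have hle_top : ∀ a : Fin m, a ≤ top := fun a => by
    have := a.isLt
    simp only [htopdef, Fin.le_def]; omega
  have hp_pos : p = bot ∨ p = top := by
    by_contra h
    push_neg at h
    obtain ⟨h1, h2⟩ := h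
    obtain ⟨x0, hx0, hx0S⟩ := hall bot
    obtain ⟨x1, hx1, hx1S⟩ := hall top
    have hb : bot < p := lt_of_le_of_ne (hbot_le p) (Ne.symm h1)
    have ht : p < top := lt_of_le_of_ne (hle_top p) h2
    exact hwS (hS.1 hx0S hx1S (hordlt hx0 hwp hb).le (hordlt hwp hx1 ht).le)
  have hp_val : σ p = bot ∨ σ p = top := by
    by_contra h
    push_neg at h
    obtain ⟨h1, h2⟩ := h
    obtain ⟨x0, hx0, hx0S⟩ := hall (σ.symm bot)
    obtain ⟨x1, hx1, hx1S⟩ := hall (σ.symm top)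
    have hl0 : σ (σ.symm bot) = bot := σ.apply_symm_apply bot
    have hl1 : σ (σ.symm top) = top := σ.apply_symm_apply top
    have hl0p : σ.symm bot ≠ p := fun h => h1 (by rw [← h, hl0])
    have hl1p : σ.symm top ≠ p := fun h => h2 (by rw [← h, hl1])
    have hb : σ (σ.symm bot) < σ p := by
      rw [hl0]; exact lt_of_le_of_ne (hbot_le _) (Ne.symm h1)
    have ht : σ p < σ (σ.symm top) := by
      rw [hl1]; exact lt_of_le_of_ne (hle_top _) h2
    have h3 : π x0 < π w := (hBval _ p hl0p x0 hx0 w hwp).mp hb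
    have h4 : π w < π x1 := (hBval p _ hl1p.symm w hwp x1 hx1).mp ht
    have hmem : π w ∈ S.image π :=
      hS.2 (Finset.mem_image_of_mem π hx0S) (Finset.mem_image_of_mem π hx1S) h3.le h4.le
    obtain ⟨v, hvS, hv⟩ := Finset.mem_image.mp hmem
    exact hwS (π.injective hv ▸ hvS)
  have hTconsec : Consec (Finset.univ.erase p) := by
    intro a b c ha hc hab hbc
    refine Finset.mem_erase.mpr ⟨?_, Finset.mem_univ b⟩
    have ha' := (Finset.mem_erase.mp ha).1
    have hc' := (Finset.mem_erase.mp hc).1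
    intro hbp
    rcases hp_pos with hp | hp
    · apply ha'
      have : a ≤ p := hbp ▸ hab
      rw [hp] at this ⊢
      exact le_antisymm this (hbot_le a)
    · apply hc'
      have : p ≤ c := hbp ▸ hbc
      rw [hp] at this ⊢
      exact le_antisymm (hle_top c) this
  have hTimg : (Finset.univ.erase p).image σ = Finset.univ.erase (σ p) := by
    ext v
    simp only [Finset.mem_image, Finset.mem_erase, Finset.mem_univ, and_true]
    constructor
    · rintro ⟨l, hl, rfl⟩
      exact fun h => hl (σ.injective h)
    · intro hv
      exact ⟨σ.symm v, fun h => hv (by rw [← h, σ.apply_symm_apply]),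
        σ.apply_symm_apply v⟩
  have hTimgconsec : Consec ((Finset.univ.erase p).image σ) := by
    rw [hTimg]
    intro a b c ha hc hab hbc
    refine Finset.mem_erase.mpr ⟨?_, Finset.mem_univ b⟩
    have ha' := (Finset.mem_erase.mp ha).1
    have hc' := (Finset.mem_erase.mp hc).1
    intro hbp
    rcases hp_val with hp | hp
    · apply ha'
      have : a ≤ σ p := hbp ▸ hab
      rw [hp] at this ⊢
      exact le_antisymm this (hbot_le a)
    · apply hc'
      have : σ p ≤ c := hbp ▸ hbc
      rw [hp] at this ⊢
      exact le_antisymm (hle_top c) this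
  have hcard : (Finset.univ.erase p).card = m - 1 := by
    rw [Finset.card_erase_of_mem (Finset.mem_univ p), Finset.card_univ, Fintype.card_fin]
  rcases hσ (Finset.univ.erase p) ⟨hTconsec, hTimgconsec⟩ with h | h
  · omega
  · have hpmem := Finset.mem_univ p
    rw [← h] at hpmem
    exact (Finset.mem_erase.mp hpmem).1 rfl

/-- if `π ∉ Y` and `σ` is the skeleton of `π` (a simple permutation
of which `π` is an inflation), then `σ` is involved in the `Y`-profile `π^Y`. -/
theorem skeleton_involved_in_profile (Y : Set PermS) (hY : IsPermClass Y)
    (h1 : (⟨1, 1⟩ : PermS) ∈ Y) {n m k : ℕ} (π : Equiv.Perm (Fin n))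
    (hπ : (⟨n, π⟩ : PermS) ∉ Y) (σ : Equiv.Perm (Fin m)) (hσ : IsSimple σ)
    (hskel : ∃ blocks : Fin m → Finset (Fin n), IsInflation π σ blocks)
    (πY : Equiv.Perm (Fin k)) (hdef : IsYDeflation Y πY π)
    (hmin : ∀ q : PermS, IsYDeflation Y q.2 π → k ≤ q.1) :
    Involves σ πY := by
  classical
  obtain ⟨B, hinfl⟩ := hskel
  obtain ⟨hBne, hBint, hBuniq, hBord, hBval⟩ := id hinfl
  obtain ⟨C, ⟨hCne, hCint, hCuniq, hCord, hCval⟩, hCY⟩ := hdef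
  -- if `Fin n` is empty then `π ∈ Y`
  have hempty : (∀ x : Fin n, False) → (⟨n, π⟩ : PermS) ∈ Y := by
    intro h
    apply hY ⟨n, π⟩ ⟨1, 1⟩ _ h1
    exact ⟨fun _ => 0, fun a _ _ => (h a).elim, fun a => (h a).elim⟩
  -- the profile has length at least 2
  have hk2 : 2 ≤ k := by
    by_contra hk
    push_neg at hk
    interval_cases k
    · exact hπ (hempty fun x => by obtain ⟨i, -, -⟩ := hCuniq x; exact i.elim0)
    · obtain ⟨k', α, hαY, f, hfmono, hfmem, hfsurj, hford⟩ := hCY 0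
      apply hπ
      apply hY ⟨n, π⟩ ⟨k', α⟩ _ hαY
      have hCuniv : ∀ x : Fin n, x ∈ C 0 := by
        intro x
        obtain ⟨i, hi, -⟩ := hCuniq x
        have hi0 : i = 0 := Subsingleton.elim i 0
        rwa [hi0] at hi
      have hfbij : Function.Bijective f :=
        ⟨hfmono.injective, fun x => hfsurj x (hCuniv x)⟩
      let e := Equiv.ofBijective f hfbij
      have hfe : ∀ x, f (e.symm x) = x := fun x => e.apply_symm_apply x
      refine ⟨fun x => e.symm x, ?_, ?_⟩
      · intro a b hab
        apply hfmono.lt_iff_lt.mp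
        rw [hfe, hfe]
        exact hab
      · intro a b
        rw [hford, hfe, hfe]
  -- the block-locating function for the profile blocks
  choose cb hcb hcbu using hCuniq
  have hCproper : ∀ j : Fin k, C j ≠ Finset.univ := by
    intro j hj
    have h0 : (⟨0, by omega⟩ : Fin k) ≠ ⟨1, by omega⟩ := by simp [Fin.ext_iff]
    obtain ⟨z0, hz0⟩ := hCne ⟨0, by omega⟩
    obtain ⟨z1, hz1⟩ := hCne ⟨1, by omega⟩
    have e0 := hcbu z0 _ hz0
    have e1 := hcbu z1 _ hz1
    have e0' := hcbu z0 j (show z0 ∈ C j by rw [hj]; exact Finset.mem_univ z0)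
    have e1' := hcbu z1 j (show z1 ∈ C j by rw [hj]; exact Finset.mem_univ z1)
    exact h0 (by rw [e0, ← e0', e1', ← e1])
  have hcb_lt : ∀ {x y : Fin n}, x < y → cb x ≠ cb y → cb x < cb y := by
    intro x y hxy hne
    rcases lt_or_gt_of_ne hne with h | h
    · exact h
    · exact absurd (hCord _ _ h y (hcb y) x (hcb x)) (lt_asymm hxy)
  rcases Nat.lt_or_ge m 2 with hm | hm
  · interval_cases m
    · exact absurd (hempty fun x => by obtain ⟨i, -, -⟩ := hBuniq x; exact i.elim0) hπ
    · refine ⟨fun _ => ⟨0, by omega⟩, ?_, ?_⟩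
      · intro a b hab
        have hab' : a = b := Subsingleton.elim a b
        rw [hab'] at hab
        exact absurd hab (lt_irrefl _)
      · intro a b
        have hab' : a = b := Subsingleton.elim a b
        subst hab'
        simp
  · rcases Nat.lt_or_ge m 3 with hm3 | hm3
    · -- m = 2
      have hm2 : m = 2 := by omega
      subst hm2
      obtain ⟨x0, hx0⟩ := hBne 0
      obtain ⟨y0, hy0⟩ := hBne 1
      have hex : ∃ x ∈ B 0, ∃ y ∈ B 1, cb x ≠ cb y := by
        by_contra h
        push_neg at h
        have hallcb : ∀ z : Fin n, cb z = cb x0 := by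
          intro z
          obtain ⟨i, hi, -⟩ := hBuniq z
          fin_cases i
          · rw [h z hi y0 hy0, ← h x0 hx0 y0 hy0]
          · rw [← h x0 hx0 z hi]
        obtain ⟨z0, hz0⟩ := hCne ⟨0, by omega⟩
        obtain ⟨z1, hz1⟩ := hCne ⟨1, by omega⟩
        have e0 := hcbu z0 _ hz0
        have e1 := hcbu z1 _ hz1
        have : (⟨0, by omega⟩ : Fin k) = ⟨1, by omega⟩ := by
          rw [e0, e1, hallcb z0, hallcb z1]
        simp [Fin.ext_iff] at this
      obtain ⟨x, hx, y, hy, hne⟩ := hex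
      have hxy : x < y := hBord 0 1 (by decide) x hx y hy
      have hlt : cb x < cb y := hcb_lt hxy hne
      refine ⟨![cb x, cb y], ?_, ?_⟩
      · intro a b hab
        fin_cases a <;> fin_cases b <;> simp_all
      · intro a b
        fin_cases a <;> fin_cases b
        · simp
        · simpa using (hBval 0 1 (by decide) x hx y hy).trans
            (hCval (cb x) (cb y) hne x (hcb x) y (hcb y)).symm
        · simpa using (hBval 1 0 (by decide) y hy x hx).trans
            (hCval (cb y) (cb x) hne.symm y (hcb y) x (hcb x)).symm
        · simp
    · -- m ≥ 3
      choose rep hrep using hBne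
      have hkey : ∀ i i' : Fin m, cb (rep i) = cb (rep i') → i = i' := by
        intro i i' he
        exact interval_sub_block hm3 π σ hσ B hinfl (hCint (cb (rep i)))
          (hCproper _) (hcb (rep i)) (hrep i)
          (by rw [he]; exact hcb (rep i')) (hrep i')
      refine ⟨fun i => cb (rep i), ?_, ?_⟩
      · intro a b hab
        exact hcb_lt (hBord a b hab _ (hrep a) _ (hrep b))
          (fun h => absurd (hkey a b h) (ne_of_lt hab))
      · intro a b
        rcases eq_or_ne a b with rfl | hab
        · simp
        · have h1 := hBval a b hab (rep a) (hrep a) (rep b) (hrep b)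
          have h2 := hCval (cb (rep a)) (cb (rep b)) (fun h => hab (hkey a b h))
            (rep a) (hcb (rep a)) (rep b) (hcb (rep b))
          rw [h1, ← h2]
end

section
/- Let π be a permutation and let σ[π_1,...,π_m] be its substitution decomposition with skeleton σ of length m ≥ 4. Then the interval blocks π_1, ..., π_m are uniquely determined: if σ[π_1,...,π_m] = σ'[π'_1,...,π'_{m'}] with σ, σ' simple of length ≥ 4, then σ = σ', m = m', and π_i = π'_i for all i. -/
lemma fin_le_apply {m : ℕ} {f : Fin m → Fin m} (hf : StrictMono f) (i : Fin m) : i ≤ f i := by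
  have h1 : (Finset.Iio i).image f ⊆ Finset.Iio (f i) := by
    intro x hx
    simp only [Finset.mem_image, Finset.mem_Iio] at *
    obtain ⟨j, hj, rfl⟩ := hx
    exact hf hj
  have h2 := Finset.card_le_card h1
  rw [Finset.card_image_of_injective _ hf.injective, Fin.card_Iio, Fin.card_Iio] at h2
  exact h2

lemma fin_strictMono_inv_eq_id {m : ℕ} {f g : Fin m → Fin m} (hf : StrictMono f)
    (hfg : ∀ i, f (g i) = i) (hgf : ∀ i, g (f i) = i) : ∀ i, f i = i := by
  have hg : StrictMono g := by
    intro u v huv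
    rcases lt_trichotomy (g u) (g v) with hlt|heq|hgt
    · exact hlt
    · exact absurd (by rw [← hfg u, ← hfg v, heq] : u = v) huv.ne
    · have := hf hgt
      rw [hfg, hfg] at this
      exact absurd huv (not_lt.2 this.le)
  intro i
  refine le_antisymm ?_ (fin_le_apply hf i)
  have := fin_le_apply hg (f i)
  rwa [hgf] at this

lemma perm_eq_of_lt_iff_s7 {m : ℕ} (σ σ' : Equiv.Perm (Fin m))
    (hcmp : ∀ i j, σ i < σ j ↔ σ' i < σ' j) : σ = σ' := by
  have hf : StrictMono (fun u => σ' (σ.symm u)) := by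
    intro u v huv
    exact (hcmp (σ.symm u) (σ.symm v)).mp (by simpa using huv)
  have key := fin_strictMono_inv_eq_id hf (g := fun u => σ (σ'.symm u)) (by simp) (by simp)
  refine Equiv.ext fun i => ?_
  have := key (σ i)
  simpa using this.symm

lemma meets_all {n m : ℕ} {π : Equiv.Perm (Fin n)} {σ : Equiv.Perm (Fin m)}
    {blocks : Fin m → Finset (Fin n)} (hσ : IsSimple σ) (h : IsInflation π σ blocks)
    {s : Finset (Fin n)} (hs : IsInterval π s) {i j : Fin m} (hij : i ≠ j)
    {x y : Fin n} (hxi : x ∈ blocks i) (hxs : x ∈ s) (hyj : y ∈ blocks j) (hys : y ∈ s) :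
    ∀ k, ∃ z ∈ blocks k, z ∈ s := by
  obtain ⟨hne, hint, huniq, hord, hval⟩ := h
  set K : Finset (Fin m) := Finset.univ.filter (fun k => ∃ z ∈ blocks k, z ∈ s) with hK
  have hmemK : ∀ k, k ∈ K ↔ ∃ z ∈ blocks k, z ∈ s := by intro k; simp [hK]
  have hKint : IsInterval σ K := by
    constructor
    · intro a b c ha hc hab hbc
      rcases eq_or_lt_of_le hab with rfl|hab
      · exact ha
      rcases eq_or_lt_of_le hbc with rfl|hbc
      · exact hc
      obtain ⟨za, hza, hzas⟩ := (hmemK a).mp ha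
      obtain ⟨zc, hzc, hzcs⟩ := (hmemK c).mp hc
      obtain ⟨zb, hzb⟩ := hne b
      exact (hmemK b).mpr ⟨zb, hzb,
        hs.1 hzas hzcs (hord a b hab za hza zb hzb).le (hord b c hbc zb hzb zc hzc).le⟩
    · intro u v w hu hw huv hvw
      obtain ⟨a, ha, hua⟩ := Finset.mem_image.mp hu
      obtain ⟨c, hc, hwc⟩ := Finset.mem_image.mp hw
      subst hua; subst hwc
      rcases eq_or_lt_of_le huv with rfl|huv
      · exact hu
      rcases eq_or_lt_of_le hvw with rfl|hvw
      · exact hw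
      set b := σ.symm v with hbdef
      have hσb : σ b = v := σ.apply_symm_apply v
      have hab : a ≠ b := fun e => by rw [e, hσb] at huv; exact lt_irrefl _ huv
      have hbc : b ≠ c := fun e => by rw [← e, hσb] at hvw; exact lt_irrefl _ hvw
      obtain ⟨za, hza, hzas⟩ := (hmemK a).mp ha
      obtain ⟨zc, hzc, hzcs⟩ := (hmemK c).mp hc
      obtain ⟨zb, hzb⟩ := hne b
      have h1 : π za < π zb := (hval a b hab za hza zb hzb).mp (by rwa [hσb])
      have h2 : π zb < π zc := (hval b c hbc zb hzb zc hzc).mp (by rwa [hσb])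
      have hmem : π zb ∈ s.image π :=
        hs.2 (Finset.mem_image_of_mem _ hzas) (Finset.mem_image_of_mem _ hzcs) h1.le h2.le
      obtain ⟨w', hw's, hw'z⟩ := Finset.mem_image.mp hmem
      have : zb ∈ s := π.injective hw'z ▸ hw's
      rw [← hσb]
      exact Finset.mem_image_of_mem _ ((hmemK b).mpr ⟨zb, hzb, this⟩)
  have hcard : 1 < K.card :=
    Finset.one_lt_card.mpr ⟨i, (hmemK i).mpr ⟨x, hxi, hxs⟩, j, (hmemK j).mpr ⟨y, hyj, hys⟩, hij⟩
  rcases hσ K hKint with hc | huniv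
  · omega
  · intro k
    exact (hmemK k).mp (huniv ▸ Finset.mem_univ k)

lemma simple_not_extreme {m : ℕ} {σ : Equiv.Perm (Fin m)} (hσ : IsSimple σ) (hm : 3 ≤ m)
    {e : Fin m} (he : (∀ x, e ≤ x) ∨ (∀ x, x ≤ e))
    (hf : (∀ x, σ e ≤ x) ∨ (∀ x, x ≤ σ e)) : False := by
  set s : Finset (Fin m) := Finset.univ.erase e with hsdef
  have hconsec : ∀ (g : Fin m) , ((∀ x, g ≤ x) ∨ (∀ x, x ≤ g)) →
      Consec (Finset.univ.erase g) := by
    intro g hg a b c ha hc hab hbc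
    rw [Finset.mem_erase] at ha hc ⊢
    refine ⟨fun hbe => ?_, Finset.mem_univ _⟩
    subst hbe
    rcases hg with hg | hg
    · exact ha.1 (le_antisymm hab (hg a))
    · exact hc.1 (le_antisymm (hg c) hbc)
  have himg : s.image σ = Finset.univ.erase (σ e) := by
    ext u
    simp only [hsdef, Finset.mem_image, Finset.mem_erase, Finset.mem_univ, and_true]
    constructor
    · rintro ⟨a, ha, rfl⟩
      exact fun hh => ha (σ.injective hh)
    · intro hu
      exact ⟨σ.symm u, fun hh => hu (by rw [← hh, σ.apply_symm_apply]), σ.apply_symm_apply u⟩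
  have hint : IsInterval σ s := ⟨hconsec e he, himg ▸ hconsec (σ e) hf⟩
  have hcard : s.card = m - 1 := by
    rw [hsdef, Finset.card_erase_of_mem (Finset.mem_univ e), Finset.card_univ, Fintype.card_fin]
  rcases hσ s hint with hc | huniv
  · omega
  · have : e ∈ s := huniv ▸ Finset.mem_univ e
    rw [Finset.mem_erase] at this
    exact this.1 rfl

lemma block_subset {n m m' : ℕ} {π : Equiv.Perm (Fin n)} {σ : Equiv.Perm (Fin m)}
    {σ' : Equiv.Perm (Fin m')} {blocks : Fin m → Finset (Fin n)}
    {blocks' : Fin m' → Finset (Fin n)}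
    (hm : 4 ≤ m) (hm2 : 2 ≤ m') (hσ : IsSimple σ)
    (h : IsInflation π σ blocks) (h' : IsInflation π σ' blocks') :
    ∀ j, ∃ i, blocks' j ⊆ blocks i := by
  intro j
  set s : Finset (Fin n) := blocks' j with hsdef
  have hsne : s.Nonempty := h'.1 j
  have hsint : IsInterval π s := h'.2.1 j
  obtain ⟨x0, hx0⟩ := hsne
  obtain ⟨i0, hi0, _⟩ := h.2.2.1 x0
  by_cases hall : ∀ x ∈ s, x ∈ blocks i0
  · exact ⟨i0, hall⟩
  exfalso
  push_neg at hall
  obtain ⟨y, hys, hyn⟩ := hall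
  obtain ⟨i1, hi1, _⟩ := h.2.2.1 y
  have hi10 : i1 ≠ i0 := fun e => hyn (e ▸ hi1)
  have hma : ∀ k, ∃ z ∈ blocks k, z ∈ s := meets_all hσ h hsint hi10 hi1 hys hi0 hx0
  -- every element of Fin n lies in s
  have hbot : (0 : ℕ) < m := by omega
  set bot : Fin m := ⟨0, by omega⟩ with hbotdef
  set top : Fin m := ⟨m - 1, by omega⟩ with htopdef
  have hbotle : ∀ x : Fin m, bot ≤ x := fun x => by simp [hbotdef, Fin.le_def]
  have htople : ∀ x : Fin m, x ≤ top := fun x => by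
    have := x.isLt; simp only [htopdef, Fin.le_def]; omega
  have suniv : ∀ z : Fin n, z ∈ s := by
    intro z
    obtain ⟨k, hk, _⟩ := h.2.2.1 z
    by_cases hke : (∀ x : Fin m, k ≤ x) ∨ (∀ x : Fin m, x ≤ k)
    · -- value argument: σ k is not extreme
      have hσk : ¬((∀ x, σ k ≤ x) ∨ (∀ x, x ≤ σ k)) := fun hf =>
        simple_not_extreme hσ (by omega) hke hf
      push_neg at hσk
      obtain ⟨⟨u, hu⟩, ⟨v, hv⟩⟩ := hσk
      set a := σ.symm u with hadef
      set b := σ.symm v with hbdef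
      have hσa : σ a = u := σ.apply_symm_apply u
      have hσb : σ b = v := σ.apply_symm_apply v
      have hak : a ≠ k := fun e => by rw [← e, hσa] at hu; exact lt_irrefl _ hu
      have hbk : b ≠ k := fun e => by rw [← e, hσb] at hv; exact lt_irrefl _ hv
      obtain ⟨za, hza, hzas⟩ := hma a
      obtain ⟨zb, hzb, hzbs⟩ := hma b
      have h1 : π za < π z := (h.2.2.2.2 a k hak za hza z hk).mp (by rw [hσa]; exact hu)
      have h2 : π z < π zb := (h.2.2.2.2 k b (Ne.symm hbk) z hk zb hzb).mp (by rw [hσb]; exact hv)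
      have hmem : π z ∈ s.image π :=
        hsint.2 (Finset.mem_image_of_mem _ hzas) (Finset.mem_image_of_mem _ hzbs) h1.le h2.le
      obtain ⟨w', hw's, hw'z⟩ := Finset.mem_image.mp hmem
      exact π.injective hw'z ▸ hw's
    · -- position argument: k strictly between bot and top
      push_neg at hke
      obtain ⟨⟨u, hu⟩, ⟨v, hv⟩⟩ := hke
      have hbk : bot < k := lt_of_le_of_lt (hbotle u) hu
      have hkt : k < top := lt_of_lt_of_le hv (htople v)
      obtain ⟨zb, hzb, hzbs⟩ := hma bot
      obtain ⟨zt, hzt, hzts⟩ := hma top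
      have h1 : zb < z := h.2.2.2.1 bot k hbk zb hzb z hk
      have h2 : z < zt := h.2.2.2.1 k top hkt z hk zt hzt
      exact hsint.1 hzbs hzts h1.le h2.le
  -- contradiction: s = everything, but there is another nonempty block'
  have : Nontrivial (Fin m') := Fin.nontrivial_iff_two_le.mpr hm2
  obtain ⟨j2, hj2⟩ := exists_ne j
  obtain ⟨w, hw⟩ := h'.1 j2
  obtain ⟨jw, _, hjw⟩ := h'.2.2.1 w
  exact hj2 ((hjw j2 hw).trans (hjw j (suniv w)).symm)


/-- uniqueness of the substitution decomposition when the skeleton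
has length at least 4. -/
theorem substitution_decomposition_unique {n m m' : ℕ} (π : Equiv.Perm (Fin n))
    (σ : Equiv.Perm (Fin m)) (σ' : Equiv.Perm (Fin m'))
    (hm : 4 ≤ m) (hm' : 4 ≤ m') (hσ : IsSimple σ) (hσ' : IsSimple σ')
    (blocks : Fin m → Finset (Fin n)) (blocks' : Fin m' → Finset (Fin n))
    (h : IsInflation π σ blocks) (h' : IsInflation π σ' blocks') :
    m = m' ∧ HEq σ σ' ∧ HEq blocks blocks' := by
  have hsub : ∀ j, ∃ i, blocks' j ⊆ blocks i := block_subset hm (by omega) hσ h h'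
  have hsub' : ∀ i, ∃ j, blocks i ⊆ blocks' j := block_subset hm' (by omega) hσ' h' h
  choose g hg using hsub
  choose f hf using hsub'
  have hgf : ∀ i, g (f i) = i := by
    intro i
    obtain ⟨x, hx⟩ := h.1 i
    have hx2 : x ∈ blocks (g (f i)) := hg (f i) (hf i hx)
    obtain ⟨k, _, hu⟩ := h.2.2.1 x
    exact (hu _ hx2).trans (hu i hx).symm
  have hfg : ∀ j, f (g j) = j := by
    intro j
    obtain ⟨x, hx⟩ := h'.1 j
    have hx2 : x ∈ blocks' (f (g j)) := hf (g j) (hg j hx)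
    obtain ⟨k, _, hu⟩ := h'.2.2.1 x
    exact (hu _ hx2).trans (hu j hx).symm
  have hbij : Function.Bijective f :=
    ⟨fun a b hab => by rw [← hgf a, hab, hgf], fun j => ⟨g j, hfg j⟩⟩
  have hmm : m = m' := by
    have := Fintype.card_of_bijective hbij
    simpa using this
  subst hmm
  have hbeq : ∀ i, blocks i = blocks' (f i) := by
    intro i
    refine subset_antisymm (hf i) ?_
    have := hg (f i)
    rwa [hgf] at this
  have hfmono : StrictMono f := by
    intro a b hab
    obtain ⟨x, hx⟩ := h.1 a
    obtain ⟨y, hy⟩ := h.1 b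
    have hxy : x < y := h.2.2.2.1 a b hab x hx y hy
    have hx' : x ∈ blocks' (f a) := (hbeq a) ▸ hx
    have hy' : y ∈ blocks' (f b) := (hbeq b) ▸ hy
    have hne : f a ≠ f b := fun e => hab.ne (by rw [← hgf a, ← hgf b, e])
    rcases lt_or_gt_of_ne hne with hlt | hgt
    · exact hlt
    · exact absurd (h'.2.2.2.1 _ _ hgt y hy' x hx') (not_lt.2 hxy.le)
  have hfid : ∀ i, f i = i := fin_strictMono_inv_eq_id hfmono hfg hgf
  have hblocks : blocks = blocks' := funext fun i => by rw [hbeq i, hfid i]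
  have hσeq : σ = σ' := by
    refine perm_eq_of_lt_iff_s7 σ σ' fun i j => ?_
    rcases eq_or_ne i j with rfl | hij
    · simp
    obtain ⟨x, hx⟩ := h.1 i
    obtain ⟨y, hy⟩ := h.1 j
    have hx' : x ∈ blocks' i := hblocks ▸ hx
    have hy' : y ∈ blocks' j := hblocks ▸ hy
    rw [h.2.2.2.2 i j hij x hx y hy, h'.2.2.2.2 i j hij x hx' y hy']
  exact ⟨rfl, heq_of_eq hσeq, heq_of_eq hblocks⟩
end

section
/- Let π be a permutation, i ≠ j positions of π, and let k, ℓ be distinct positions belonging to the minimal block mb(π; i, j). Then mb(π; k, ℓ) ⊆ mb(π; i, j). Moreover, if k ≤ i < j ≤ ℓ, then mb(π; k, ℓ) = mb(π; i, j). -/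
/-- The minimal block of `π` on positions `i, j`. -/
def IsMinBlock {n : ℕ} (π : Equiv.Perm (Fin n)) (i j : Fin n) (s : Finset (Fin n)) : Prop :=
  IsInterval π s ∧ i ∈ s ∧ j ∈ s ∧
    ∀ t : Finset (Fin n), IsInterval π t → i ∈ t → j ∈ t → s ⊆ t

/-- if `k, ℓ` are distinct positions inside `mb(π; i, j)`, then
`mb(π; k, ℓ) ⊆ mb(π; i, j)`; moreover if `k ≤ i < j ≤ ℓ` then they are equal. -/
theorem minBlock_mono {n : ℕ} (π : Equiv.Perm (Fin n)) (i j k l : Fin n)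
    (hij : i ≠ j) (hkl : k ≠ l) (s t : Finset (Fin n))
    (hs : IsMinBlock π i j s) (ht : IsMinBlock π k l t)
    (hks : k ∈ s) (hls : l ∈ s) :
    t ⊆ s ∧ (k ≤ i → i < j → j ≤ l → t = s) := by
  refine ⟨ht.2.2.2 s hs.1 hks hls, fun hki hij' hjl => ?_⟩
  have hkt := ht.2.1
  have hlt := ht.2.2.1
  have hit : i ∈ t := ht.1.1 hkt hlt hki (le_of_lt (lt_of_lt_of_le hij' hjl))
  have hjt : j ∈ t := ht.1.1 hkt hlt (le_trans hki (le_of_lt hij')) hjl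
  exact Finset.Subset.antisymm (ht.2.2.2 s hs.1 hks hls) (hs.2.2.2 t ht.1 hit hjt)
end

section
/- For every finitely based permutation class X = Av(D), the wreath product X ≀ Av(21) with the class of increasing permutations is finitely based; in particular, every basis element of X ≀ Av(21) has length at most d + (d−1)·b where d = max length of elements of D and b is an absolute constant. -/
/-! ### Auxiliary material for the proof -/

noncomputable section
namespace WreathAux
open Finset
attribute [local instance] Classical.propDecidable

/-- The class of increasing permutations. -/
def Av21 : Set PermS := Av {(⟨2, Equiv.swap 0 1⟩ : PermS)}

/-! #### Patterns on subsets -/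

variable {n : ℕ} (π : Equiv.Perm (Fin n))

lemma card_image_perm (S : Finset (Fin n)) {k : ℕ} (h : S.card = k) :
    (S.image ⇑π).card = k := by
  rw [Finset.card_image_of_injective _ π.injective, h]

/-- the pattern of `π` on a subset `S` of positions. -/
def patternOn (S : Finset (Fin n)) {k : ℕ} (h : S.card = k) : Equiv.Perm (Fin k) :=
  Equiv.ofBijective
    (fun a => ((S.image ⇑π).orderIsoOfFin (card_image_perm π S h)).symm
      ⟨π (S.orderEmbOfFin h a), Finset.mem_image_of_mem _ (Finset.orderEmbOfFin_mem S h a)⟩)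
    (Finite.injective_iff_bijective.mp (by
      intro a b hab
      have := congrArg (fun z => (((S.image ⇑π).orderIsoOfFin (card_image_perm π S h)) z : Fin n)) hab
      simp only [OrderIso.apply_symm_apply] at this
      exact (S.orderEmbOfFin h).injective (π.injective this)))

lemma patternOn_lt (S : Finset (Fin n)) {k : ℕ} (h : S.card = k) (a b : Fin k) :
    patternOn π S h a < patternOn π S h b ↔
      π (S.orderEmbOfFin h a) < π (S.orderEmbOfFin h b) := by
  show ((S.image ⇑π).orderIsoOfFin (card_image_perm π S h)).symm _ < ((S.image ⇑π).orderIsoOfFin (card_image_perm π S h)).symm _ ↔ _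
  rw [OrderIso.lt_iff_lt]
  exact Subtype.mk_lt_mk

lemma patternOn_isPatternOf (S : Finset (Fin n)) {k : ℕ} (h : S.card = k) :
    IsPatternOf (patternOn π S h) π S := by
  refine ⟨⇑(S.orderEmbOfFin h), (S.orderEmbOfFin h).strictMono,
    fun i => Finset.orderEmbOfFin_mem S h i, fun x hx => ?_,
    fun a b => (patternOn_lt π S h a b)⟩
  obtain ⟨i, hi⟩ := (S.orderIsoOfFin h).surjective ⟨x, hx⟩
  exact ⟨i, congrArg Subtype.val hi⟩

lemma patternOn_sinvolves (S : Finset (Fin n)) {k : ℕ} (h : S.card = k) :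
    SInvolves ⟨k, patternOn π S h⟩ ⟨n, π⟩ :=
  ⟨⇑(S.orderEmbOfFin h), (S.orderEmbOfFin h).strictMono, fun a b => patternOn_lt π S h a b⟩

/-! #### Runs -/

/-- value at position `i`, as a natural number. -/
def v (i : ℕ) : ℕ := if h : i < n then (π ⟨i, h⟩).val else 0

lemma v_lt (i : ℕ) (h : i < n) : v π i = (π ⟨i, h⟩).val := dif_pos h

lemma v_fin (x : Fin n) : v π x.val = (π x).val := by
  rw [v_lt π x.val x.isLt]

lemma v_inj {i j : ℕ} (hi : i < n) (hj : j < n) (h : v π i = v π j) : i = j := by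
  rw [v_lt π i hi, v_lt π j hj] at h
  have := π.injective (Fin.val_injective h)
  exact congrArg Fin.val this

/-- `p` is a break: position `p+1` exists but does not continue an ascending run. -/
def brkP (p : ℕ) : Prop := p + 1 < n ∧ v π (p + 1) ≠ v π p + 1

/-- run index of a position. -/
def rIdx (x : ℕ) : ℕ := ((Finset.range x).filter (brkP π)).card

lemma rIdx_mono {x y : ℕ} (h : x ≤ y) : rIdx π x ≤ rIdx π y :=
  Finset.card_le_card (Finset.filter_subset_filter _ (Finset.range_subset_range.2 h))

lemma rIdx_succ (x : ℕ) :
    rIdx π (x + 1) = rIdx π x + (if brkP π x then 1 else 0) := by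
  unfold rIdx
  rw [Finset.range_add_one, Finset.filter_insert]
  split
  · rw [Finset.card_insert_of_notMem (by simp)]
  · simp

lemma rIdx_zero : rIdx π 0 = 0 := by simp [rIdx]

lemma not_brk_of_same (x : ℕ) (hx : ¬ brkP π x) (h1 : x + 1 < n) :
    v π (x + 1) = v π x + 1 := by
  by_contra h; exact hx ⟨h1, h⟩

/-- within a run values ascend by exactly the position difference. -/
lemma run_values : ∀ (t x : ℕ), x + t < n → rIdx π x = rIdx π (x + t) →
    v π (x + t) = v π x + t := by
  intro t
  induction t with
  | zero => intro x _ _; simp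
  | succ t ih =>
    intro x hlt hr
    have h1 : rIdx π x ≤ rIdx π (x + t) := rIdx_mono π (by omega)
    have h2 : rIdx π (x + t) ≤ rIdx π (x + t + 1) := rIdx_mono π (by omega)
    rw [show x + (t+1) = x + t + 1 by omega] at hr hlt ⊢
    have hnb : ¬ brkP π (x + t) := by
      intro hb
      rw [rIdx_succ, if_pos hb] at hr
      omega
    have := rIdx_succ π (x + t)
    rw [if_neg hnb] at this
    have hr' : rIdx π x = rIdx π (x + t) := by omega
    rw [not_brk_of_same π (x+t) hnb hlt, ih x (by omega) hr']
    omega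

/-- between distinct runs there is a break. -/
lemma exists_brk : ∀ (t x : ℕ), rIdx π x < rIdx π (x + t) →
    ∃ p, x ≤ p ∧ p < x + t ∧ brkP π p := by
  intro t
  induction t with
  | zero => intro x h; rw [Nat.add_zero] at h; omega
  | succ t ih =>
    intro x h
    rcases lt_or_ge (rIdx π x) (rIdx π (x + t)) with h' | h'
    · obtain ⟨p, hp1, hp2, hp3⟩ := ih x h'
      exact ⟨p, hp1, by omega, hp3⟩
    · rw [show x + (t+1) = x + t + 1 by omega, rIdx_succ] at h
      split at h
      · exact ⟨x + t, by omega, by omega, by assumption⟩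
      · omega

lemma rIdx_surj : ∀ (x i : ℕ), i ≤ rIdx π x → ∃ z ≤ x, rIdx π z = i := by
  intro x
  induction x with
  | zero => intro i h; rw [rIdx_zero] at h; exact ⟨0, le_refl _, by rw [rIdx_zero]; omega⟩
  | succ x ih =>
    intro i h
    rcases le_or_gt i (rIdx π x) with h' | h'
    · obtain ⟨z, hz, hz2⟩ := ih i h'
      exact ⟨z, by omega, hz2⟩
    · refine ⟨x + 1, le_refl _, ?_⟩
      have := rIdx_succ π x
      split at this <;> omega

lemma rIdx_n_eq (hn : 0 < n) : rIdx π n = rIdx π (n - 1) := by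
  have hnb : ¬ brkP π (n - 1) := fun hb => by have := hb.1; omega
  have h2 := rIdx_succ π (n - 1)
  rw [if_neg hnb, show n - 1 + 1 = n by omega] at h2
  omega

/-- every index up to the total number of breaks is attained at a position `< n`. -/
lemma rIdx_attained (hn : 0 < n) {i : ℕ} (hi : i ≤ rIdx π n) : ∃ z < n, rIdx π z = i := by
  rw [rIdx_n_eq π hn] at hi
  obtain ⟨z, hz, hz2⟩ := rIdx_surj π (n-1) i hi
  exact ⟨z, by omega, hz2⟩

/-- a value between two values of the same run is attained within that run. -/
lemma value_in_run {x y w : ℕ} (hxy : x ≤ y) (hy : y < n) (hr : rIdx π x = rIdx π y)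
    (h1 : v π x ≤ w) (h2 : w ≤ v π y) :
    ∃ z, x ≤ z ∧ z ≤ y ∧ v π z = w ∧ rIdx π z = rIdx π x := by
  have hv : v π y = v π x + (y - x) := by
    have := run_values π (y - x) x (by omega) (by rw [show x + (y-x) = y by omega]; exact hr)
    rwa [show x + (y-x) = y by omega] at this
  refine ⟨x + (w - v π x), by omega, by omega, ?_, ?_⟩
  · have hr2 : rIdx π x = rIdx π (x + (w - v π x)) := by
      have a1 := rIdx_mono π (show x ≤ x + (w - v π x) by omega)
      have a2 := rIdx_mono π (show x + (w - v π x) ≤ y by omega)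
      omega
    have := run_values π (w - v π x) x (by omega) hr2
    omega
  · have a1 := rIdx_mono π (show x ≤ x + (w - v π x) by omega)
    have a2 := rIdx_mono π (show x + (w - v π x) ≤ y by omega)
    omega

/-- comparisons with a fixed element of another run are uniform across a run. -/
lemma uniform_cmp {x x' y : ℕ} (hx : x < n) (hx' : x' < n) (hy : y < n)
    (hr : rIdx π x = rIdx π x') (hne : rIdx π y ≠ rIdx π x) :
    (v π x < v π y ↔ v π x' < v π y) := by
  have key : ∀ a b : ℕ, a < n → b < n → a ≤ b → rIdx π a = rIdx π b →
      rIdx π y ≠ rIdx π a → v π a < v π y → v π b < v π y := by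
    intro a b ha hb hab hrab hne' hlt
    by_contra hcon
    push_neg at hcon
    have hyb : v π y ≠ v π b := fun h => by
      have := v_inj π hy hb h
      subst this
      exact hne' (by omega)
    have hya : v π a ≤ v π y := le_of_lt hlt
    obtain ⟨z, hz1, hz2, hz3, hz4⟩ := value_in_run π hab hb hrab hya (by omega)
    have : z = y := v_inj π (by omega) hy hz3
    subst this
    exact hne' (by omega)
  constructor
  · intro h
    rcases le_or_gt x x' with hle | hlt
    · exact key x x' hx hx' hle hr (by omega) h
    · have hv : v π x = v π x' + (x - x') := by
        have := run_values π (x - x') x' (by omega) (by rw [show x' + (x-x') = x by omega]; omega)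
        rwa [show x' + (x-x') = x by omega] at this
      omega
  · intro h
    rcases le_or_gt x' x with hle | hlt
    · exact key x' x hx' hx hle hr.symm (by omega) h
    · have hv : v π x' = v π x + (x' - x) := by
        have := run_values π (x' - x) x (by omega) (by rw [show x + (x'-x) = x' by omega]; omega)
        rwa [show x + (x'-x) = x' by omega] at this
      omega

/-- within a run, `π` is increasing. -/
lemma run_increasing {x y : Fin n} (hxy : x < y) (hr : rIdx π x.val = rIdx π y.val) :
    π x < π y := by
  have hv : v π y.val = v π x.val + (y.val - x.val) := by
    have := run_values π (y.val - x.val) x.val (by omega)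
      (by rw [show x.val + (y.val - x.val) = y.val by omega]; exact hr)
    rwa [show x.val + (y.val-x.val) = y.val by omega] at this
  have hxy' : x.val < y.val := hxy
  have : (π x).val < (π y).val := by
    rw [← v_fin, ← v_fin]
    omega
  exact this

/-! #### small helpers -/

lemma strictMono_of_succ {k : ℕ} {β : Type*} [Preorder β] (f : Fin k → β)
    (h : ∀ (a : Fin k) (hh : a.val + 1 < k), f a < f ⟨a.val + 1, hh⟩) : StrictMono f := by
  have main : ∀ (t : ℕ) (a : Fin k) (h2 : a.val + t < k), 0 < t → f a < f ⟨a.val + t, h2⟩ := by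
    intro t
    induction t with
    | zero => intro a h2 h3; omega
    | succ t ih =>
      intro a h2 _
      rcases Nat.eq_zero_or_pos t with rfl | ht
      · exact h a h2
      · exact lt_trans (ih a (by omega) ht)
          (h ⟨a.val + t, by omega⟩ (by show a.val + t + 1 < k; omega))
  intro a b hab
  have hab' : a.val < b.val := hab
  have hb : b = ⟨a.val + (b.val - a.val), by omega⟩ :=
    Fin.ext (by show b.val = a.val + (b.val - a.val); omega)
  rw [hb]
  exact main (b.val - a.val) a _ (by omega)

lemma av21_strictMono {c : ℕ} (α : Equiv.Perm (Fin c)) (hα : (⟨c, α⟩ : PermS) ∈ Av21) :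
    StrictMono ⇑α := by
  intro a b hab
  rcases lt_trichotomy (α a) (α b) with h | h | h
  · exact h
  · exact absurd (α.injective h) (ne_of_lt hab)
  · exfalso
    apply hα ⟨2, Equiv.swap 0 1⟩ rfl
    show Involves (Equiv.swap 0 1 : Equiv.Perm (Fin 2)) α
    have htwo : ∀ u : Fin 2, u = 0 ∨ u = 1 := by decide
    refine ⟨![a, b], ?_, ?_⟩
    · intro i j hij
      rcases htwo i with rfl | rfl <;> rcases htwo j with rfl | rfl
      · exact absurd hij (lt_irrefl 0)
      · simpa using hab
      · exact absurd hij (by decide)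
      · exact absurd hij (lt_irrefl 1)
    · intro i j
      have hs0 : ((Equiv.swap 0 1 : Equiv.Perm (Fin 2)) 0) = 1 := by decide
      have hs1 : ((Equiv.swap 0 1 : Equiv.Perm (Fin 2)) 1) = 0 := by decide
      rcases htwo i with rfl | rfl <;> rcases htwo j with rfl | rfl
      · exact iff_of_false (lt_irrefl _) (lt_irrefl _)
      · rw [hs0, hs1]
        exact iff_of_false (by decide) (by simpa using lt_asymm h)
      · rw [hs0, hs1]
        exact iff_of_true (by decide) (by simpa using h)
      · exact iff_of_false (lt_irrefl _) (lt_irrefl _)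

/-- every interval of a permutation whose pattern avoids 21 is increasing. -/
lemma block_increasing {k c : ℕ} (τ : Equiv.Perm (Fin k)) (α : Equiv.Perm (Fin c))
    (hα : (⟨c, α⟩ : PermS) ∈ Av21) (B : Finset (Fin k)) (hp : IsPatternOf α τ B) :
    ∀ u ∈ B, ∀ w ∈ B, u < w → τ u < τ w := by
  obtain ⟨h, hmono, hmem, hsurj, hcmp⟩ := hp
  intro u hu w hw huw
  obtain ⟨a, rfl⟩ := hsurj u hu
  obtain ⟨b, rfl⟩ := hsurj w hw
  have hab : a < b := hmono.lt_iff_lt.mp huw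
  exact (hcmp a b).mp (av21_strictMono α hα hab)


/-! #### The canonical run deflation -/

lemma key_alternative {n : ℕ} (π : Equiv.Perm (Fin n)) (hn : 0 < n) (D : Set PermS) :
    (⟨n, π⟩ : PermS) ∈ WreathSet (Av D) Av21 ∨
    ∃ (kδ : ℕ) (δ : Equiv.Perm (Fin kδ)), (⟨kδ, δ⟩ : PermS) ∈ D ∧
      ∃ y : Fin kδ → Fin n, StrictMono y ∧
        (∀ a b, δ a < δ b ↔ π (y a) < π (y b)) ∧
        ∀ (a : Fin kδ) (hh : a.val + 1 < kδ),
          ∃ p : ℕ, (y a).val ≤ p ∧ p + 1 < n ∧ p + 1 ≤ (y ⟨a.val + 1, hh⟩).val ∧ brkP π p := by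
  classical
  set K := rIdx π n with hK
  -- the runs
  set run : ℕ → Finset (Fin n) := fun i => Finset.univ.filter (fun x => rIdx π x.val = i)
    with hrun
  have hmemrun : ∀ (x : Fin n) (i : ℕ), x ∈ run i ↔ rIdx π x.val = i := by
    intro x i; simp [hrun]
  have hne : ∀ i ≤ K, (run i).Nonempty := by
    intro i hi
    obtain ⟨z, hz, hz2⟩ := rIdx_attained π hn hi
    exact ⟨⟨z, hz⟩, (hmemrun _ _).mpr hz2⟩
  -- the leftmost points of the runs
  set e : Fin (K + 1) → Fin n := fun i => (run i.val).min' (hne i.val (by omega)) with he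
  have he_mem : ∀ i : Fin (K + 1), rIdx π (e i).val = i.val := by
    intro i
    exact (hmemrun _ _).mp ((run i.val).min'_mem (hne i.val (by omega)))
  have he_min : ∀ (i : Fin (K + 1)) (x : Fin n), rIdx π x.val = i.val → e i ≤ x := by
    intro i x hx
    exact (run i.val).min'_le x ((hmemrun _ _).mpr hx)
  have hord' : ∀ x y : Fin n, rIdx π x.val < rIdx π y.val → x < y := by
    intro x y hxy
    by_contra hcon
    push_neg at hcon
    have : rIdx π y.val ≤ rIdx π x.val := rIdx_mono π hcon
    omega
  have he_mono : StrictMono e := by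
    intro i j hij
    apply hord'
    rw [he_mem, he_mem]
    exact hij
  set M : Finset (Fin n) := Finset.image e Finset.univ with hMdef
  have hM : M.card = K + 1 := by
    rw [hMdef, Finset.card_image_of_injective _ he_mono.injective, Finset.card_univ,
      Fintype.card_fin]
  have hfM : ⇑(M.orderEmbOfFin hM) = e :=
    (Finset.orderEmbOfFin_unique hM (fun i => Finset.mem_image_of_mem _ (Finset.mem_univ i))
      he_mono).symm
  set σ : Equiv.Perm (Fin (K + 1)) := patternOn π M hM with hσ
  have hσlt : ∀ i j, σ i < σ j ↔ π (e i) < π (e j) := by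
    intro i j
    have := patternOn_lt π M hM i j
    rwa [hfM] at this
  -- uniform comparison lemmas at the `Fin` level
  have hwl : ∀ x x' z : Fin n, rIdx π x.val = rIdx π x'.val → rIdx π z.val ≠ rIdx π x.val →
      (π x < π z ↔ π x' < π z) := by
    intro x x' z h1 h2
    have := uniform_cmp π x.isLt x'.isLt z.isLt h1 h2
    rw [v_fin, v_fin, v_fin] at this
    constructor
    · intro hlt
      have : (π x').val < (π z).val := this.mp hlt
      exact this
    · intro hlt
      have : (π x).val < (π z).val := this.mpr hlt
      exact this
  have hwr : ∀ x z z' : Fin n, rIdx π z.val = rIdx π z'.val → rIdx π x.val ≠ rIdx π z.val →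
      (π x < π z ↔ π x < π z') := by
    intro x z z' h1 h2
    have h3 := hwl z z' x h1 (by omega)
    have hxz : x ≠ z := fun h => h2 (by rw [h])
    have hxz' : x ≠ z' := fun h => h2 (by rw [h, ← h1])
    have e1 : (π x).val ≠ (π z).val := fun h =>
      hxz (π.injective (Fin.val_injective h))
    have e2 : (π x).val ≠ (π z').val := fun h =>
      hxz' (π.injective (Fin.val_injective h))
    have h3' : (π z).val < (π x).val ↔ (π z').val < (π x).val := by
      constructor
      · intro hlt; exact h3.mp hlt
      · intro hlt; exact h3.mpr hlt
    constructor
    · intro hlt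
      have hlt' : (π x).val < (π z).val := hlt
      show (π x).val < (π z').val
      omega
    · intro hlt
      have hlt' : (π x).val < (π z').val := hlt
      show (π x).val < (π z).val
      omega
  set blocks : Fin (K + 1) → Finset (Fin n) := fun i => run i.val with hblocks
  have hinfl : IsInflation π σ blocks := by
    refine ⟨?_, ?_, ?_, ?_, ?_⟩
    · intro i; exact hne i.val (by omega)
    · intro i
      constructor
      · intro a b c ha hc hab hbc
        rw [hmemrun] at ha hc ⊢
        have h1 := rIdx_mono π (show a.val ≤ b.val from hab)
        have h2 := rIdx_mono π (show b.val ≤ c.val from hbc)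
        omega
      · intro a b c ha hc hab hbc
        obtain ⟨x, hx, rfl⟩ := Finset.mem_image.mp ha
        obtain ⟨z, hz, rfl⟩ := Finset.mem_image.mp hc
        rw [hmemrun] at hx hz
        have hab' : (π x).val ≤ b.val := hab
        have hbc' : b.val ≤ (π z).val := hbc
        rcases le_total x z with hxz | hxz
        · obtain ⟨z', hz1, hz2, hz3, hz4⟩ := value_in_run π (w := b.val)
            (show x.val ≤ z.val from hxz) z.isLt (by omega) (by rw [v_fin]; omega)
            (by rw [v_fin]; omega)
          set zf : Fin n := ⟨z', by omega⟩ with hzf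
          have hzv : zf.val = z' := rfl
          have h5 := v_fin π zf
          rw [hzv] at h5
          exact Finset.mem_image.mpr ⟨zf, (hmemrun _ _).mpr (by rw [hzv]; omega),
            Fin.ext (by omega)⟩
        · -- z ≤ x : values increase along the run so π x ≤ π z forces equality
          have hv : v π x.val = v π z.val + (x.val - z.val) := by
            have := run_values π (x.val - z.val) z.val (by omega)
              (by rw [show z.val + (x.val - z.val) = x.val by omega]; omega)
            rwa [show z.val + (x.val - z.val) = x.val by omega] at this
          rw [v_fin, v_fin] at hv
          have : b.val = (π x).val := by omega
          refine Finset.mem_image.mpr ⟨x, (hmemrun _ _).mpr hx, (Fin.ext this.symm)⟩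
    · intro x
      have hxK : rIdx π x.val ≤ K := rIdx_mono π (le_of_lt x.isLt)
      refine ⟨⟨rIdx π x.val, by omega⟩, (hmemrun _ _).mpr rfl, ?_⟩
      intro j hj
      rw [hmemrun] at hj
      exact Fin.ext (by simp [← hj])
    · intro i j hij x hx y hy
      rw [hmemrun] at hx hy
      exact hord' x y (by rw [hx, hy]; exact hij)
    · intro i j hij x hx y hy
      rw [hmemrun] at hx hy
      have hijv : i.val ≠ j.val := fun h => hij (Fin.ext h)
      have h1 : σ i < σ j ↔ π x < π (e j) := by
        rw [hσlt]
        exact hwl (e i) x (e j) (by rw [he_mem, hx]) (by rw [he_mem, he_mem]; omega)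
      rw [h1]
      exact hwr x (e j) y (by rw [he_mem, hy]) (by rw [hx, he_mem]; omega)
  by_cases hc : ∃ (kδ : ℕ) (δ : Equiv.Perm (Fin kδ)), (⟨kδ, δ⟩ : PermS) ∈ D ∧ Involves δ σ
  · right
    obtain ⟨kδ, δ, hδ, f', hf'mono, hf'iff⟩ := hc
    refine ⟨kδ, δ, hδ, fun a => e (f' a), he_mono.comp hf'mono, ?_, ?_⟩
    · intro a b
      rw [hf'iff a b, hσlt]
    · intro a hh
      set a1 : Fin kδ := ⟨a.val + 1, hh⟩ with ha1
      have hlt : f' a < f' a1 := hf'mono (by exact Fin.mk_lt_mk.mpr (by omega) : a < a1)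
      have hylt : e (f' a) < e (f' a1) := he_mono hlt
      have hr : rIdx π (e (f' a)).val < rIdx π (e (f' a1)).val := by
        rw [he_mem, he_mem]
        exact hlt
      obtain ⟨p, hp1, hp2, hp3⟩ := exists_brk π ((e (f' a1)).val - (e (f' a)).val) (e (f' a)).val
        (by rw [show (e (f' a)).val + ((e (f' a1)).val - (e (f' a)).val) = (e (f' a1)).val by
              have : (e (f' a)).val < (e (f' a1)).val := hylt
              omega]
            exact hr)
      refine ⟨p, hp1, hp3.1, ?_, hp3⟩
      show p + 1 ≤ (e (f' a1)).val
      have hy2 : (e (f' a)).val < (e (f' a1)).val := hylt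
      omega
  · left
    refine ⟨K + 1, σ, ?_, blocks, hinfl, ?_⟩
    · intro b hb hsi
      exact hc ⟨b.1, b.2, hb, hsi⟩
    · intro i
      refine ⟨(blocks i).card, patternOn π (blocks i) rfl, ?_, patternOn_isPatternOf π _ rfl⟩
      intro b hb
      have hb' : b = (⟨2, Equiv.swap 0 1⟩ : PermS) := hb
      subst hb'
      rintro ⟨f, hmono, hiff⟩
      have h01 := hiff 0 1
      have hs0 : ((Equiv.swap 0 1 : Equiv.Perm (Fin 2)) 0) = 1 := by decide
      have hs1 : ((Equiv.swap 0 1 : Equiv.Perm (Fin 2)) 1) = 0 := by decide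
      rw [hs0, hs1] at h01
      have hf01 : f 0 < f 1 := hmono (by decide)
      have hemb := ((blocks i).orderEmbOfFin rfl).strictMono hf01
      have hin0 := Finset.orderEmbOfFin_mem (blocks i) rfl (f 0)
      have hin1 := Finset.orderEmbOfFin_mem (blocks i) rfl (f 1)
      rw [hmemrun] at hin0 hin1
      have hinc : π ((blocks i).orderEmbOfFin rfl (f 0)) < π ((blocks i).orderEmbOfFin rfl (f 1)) :=
        run_increasing π hemb (by rw [hin0, hin1])
      have : (1 : Fin 2) < 0 := h01.mpr ((patternOn_lt π (blocks i) rfl (f 0) (f 1)).mpr hinc)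
      exact absurd this (by decide)


/-! #### minimal witnesses stay outside the wreath product -/

lemma tau_not_in_wreath {n : ℕ} (π : Equiv.Perm (Fin n)) (S : Finset (Fin n)) {k : ℕ}
    (hS : S.card = k) (D : Set PermS) {kδ : ℕ} (δ : Equiv.Perm (Fin kδ))
    (hδD : (⟨kδ, δ⟩ : PermS) ∈ D)
    (y : Fin kδ → Fin n) (hy : StrictMono y) (hyS : ∀ a, y a ∈ S)
    (hpat : ∀ a b, δ a < δ b ↔ π (y a) < π (y b))
    (hsep : ∀ (a : Fin kδ) (hh : a.val + 1 < kδ), ∃ p p1 : Fin n, p ∈ S ∧ p1 ∈ S ∧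
      p1.val = p.val + 1 ∧ y a ≤ p ∧ p1 ≤ y ⟨a.val + 1, hh⟩ ∧
      (π p1 < π p ∨ ∃ q ∈ S, π p < π q ∧ π q < π p1)) :
    (⟨k, patternOn π S hS⟩ : PermS) ∉ WreathSet (Av D) Av21 := by
  intro hmem
  simp only [WreathSet, Set.mem_setOf_eq, InWreath, IsYDeflation] at hmem
  obtain ⟨m, σ, hσX, blocks, hinfl, hbl⟩ := hmem
  obtain ⟨hneB, hint, hcover, hord, hcmp5⟩ := hinfl
  set τ : Equiv.Perm (Fin k) := patternOn π S hS with hτ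
  have hidx_val : ∀ (x : Fin n) (hx : x ∈ S),
      S.orderEmbOfFin hS ((S.orderIsoOfFin hS).symm ⟨x, hx⟩) = x := by
    intro x hx
    exact congrArg Subtype.val ((S.orderIsoOfFin hS).apply_symm_apply ⟨x, hx⟩)
  have hidx_lt : ∀ (x x' : Fin n) (hx : x ∈ S) (hx' : x' ∈ S),
      (S.orderIsoOfFin hS).symm ⟨x, hx⟩ < (S.orderIsoOfFin hS).symm ⟨x', hx'⟩ ↔ x < x' := by
    intro x x' hx hx'
    rw [OrderIso.lt_iff_lt]
    exact Subtype.mk_lt_mk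
  have hidx_le : ∀ (x x' : Fin n) (hx : x ∈ S) (hx' : x' ∈ S),
      (S.orderIsoOfFin hS).symm ⟨x, hx⟩ ≤ (S.orderIsoOfFin hS).symm ⟨x', hx'⟩ ↔ x ≤ x' := by
    intro x x' hx hx'
    rw [OrderIso.le_iff_le]
    exact Subtype.mk_le_mk
  have hτlt : ∀ (x x' : Fin n) (hx : x ∈ S) (hx' : x' ∈ S),
      τ ((S.orderIsoOfFin hS).symm ⟨x, hx⟩) < τ ((S.orderIsoOfFin hS).symm ⟨x', hx'⟩) ↔
        π x < π x' := by
    intro x x' hx hx'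
    rw [hτ, patternOn_lt, hidx_val, hidx_val]
  -- the block containing the `a`-th marked point
  set g : Fin kδ → Fin m :=
    fun a => (hcover ((S.orderIsoOfFin hS).symm ⟨y a, hyS a⟩)).choose with hg
  have hgmem : ∀ a : Fin kδ, (S.orderIsoOfFin hS).symm ⟨y a, hyS a⟩ ∈ blocks (g a) :=
    fun a => (hcover ((S.orderIsoOfFin hS).symm ⟨y a, hyS a⟩)).choose_spec.1
  have hgsucc : ∀ (a : Fin kδ) (hh : a.val + 1 < kδ), g a < g ⟨a.val + 1, hh⟩ := by
    intro a hh
    set a1 : Fin kδ := ⟨a.val + 1, hh⟩ with ha1def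
    have hyy : y a < y a1 := hy (show a.val < a.val + 1 by omega)
    have hylt : (S.orderIsoOfFin hS).symm ⟨y a, hyS a⟩ <
        (S.orderIsoOfFin hS).symm ⟨y a1, hyS a1⟩ := (hidx_lt _ _ _ _).mpr hyy
    have hne_g : g a ≠ g a1 := by
      intro heq
      obtain ⟨p, p1, hpS, hp1S, hval, hyp, hp1y, hcase⟩ := hsep a hh
      have hpp1 : p < p1 := by
        have : p.val < p1.val := by omega
        exact this
      have hBa1 : (S.orderIsoOfFin hS).symm ⟨y a1, hyS a1⟩ ∈ blocks (g a) := by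
        rw [heq]; exact hgmem a1
      obtain ⟨hc1, hc2⟩ := hint (g a)
      have hple : (S.orderIsoOfFin hS).symm ⟨y a, hyS a⟩ ≤ (S.orderIsoOfFin hS).symm ⟨p, hpS⟩ :=
        (hidx_le _ _ _ _).mpr hyp
      have hplt : (S.orderIsoOfFin hS).symm ⟨p, hpS⟩ < (S.orderIsoOfFin hS).symm ⟨p1, hp1S⟩ :=
        (hidx_lt _ _ _ _).mpr hpp1
      have hp1le : (S.orderIsoOfFin hS).symm ⟨p1, hp1S⟩ ≤
          (S.orderIsoOfFin hS).symm ⟨y a1, hyS a1⟩ := (hidx_le _ _ _ _).mpr hp1y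
      have hpB : (S.orderIsoOfFin hS).symm ⟨p, hpS⟩ ∈ blocks (g a) :=
        hc1 (hgmem a) hBa1 hple (le_trans (le_of_lt hplt) hp1le)
      have hp1B : (S.orderIsoOfFin hS).symm ⟨p1, hp1S⟩ ∈ blocks (g a) :=
        hc1 (hgmem a) hBa1 (le_trans hple (le_of_lt hplt)) hp1le
      obtain ⟨c, α, hα21, hpatB⟩ := hbl (g a)
      have hincr := block_increasing τ α hα21 (blocks (g a)) hpatB
      rcases hcase with hdesc | ⟨q, hqS, hq1, hq2⟩
      · have h1 : τ ((S.orderIsoOfFin hS).symm ⟨p1, hp1S⟩) <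
            τ ((S.orderIsoOfFin hS).symm ⟨p, hpS⟩) := (hτlt _ _ _ _).mpr hdesc
        exact absurd (hincr _ hpB _ hp1B hplt) (lt_asymm h1)
      · have ht1 : τ ((S.orderIsoOfFin hS).symm ⟨p, hpS⟩) <
            τ ((S.orderIsoOfFin hS).symm ⟨q, hqS⟩) := (hτlt _ _ _ _).mpr hq1
        have ht2 : τ ((S.orderIsoOfFin hS).symm ⟨q, hqS⟩) <
            τ ((S.orderIsoOfFin hS).symm ⟨p1, hp1S⟩) := (hτlt _ _ _ _).mpr hq2
        have hqB : (S.orderIsoOfFin hS).symm ⟨q, hqS⟩ ∈ blocks (g a) := by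
          have himg := hc2 (Finset.mem_image_of_mem ⇑τ hpB) (Finset.mem_image_of_mem ⇑τ hp1B)
            (le_of_lt ht1) (le_of_lt ht2)
          obtain ⟨u, hu, hu2⟩ := Finset.mem_image.mp himg
          rwa [τ.injective hu2] at hu
        have hpq : (S.orderIsoOfFin hS).symm ⟨p, hpS⟩ < (S.orderIsoOfFin hS).symm ⟨q, hqS⟩ := by
          rcases lt_trichotomy ((S.orderIsoOfFin hS).symm ⟨p, hpS⟩)
            ((S.orderIsoOfFin hS).symm ⟨q, hqS⟩) with h | h | h
          · exact h
          · rw [h] at ht1; exact absurd ht1 (lt_irrefl _)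
          · exact absurd (hincr _ hqB _ hpB h) (lt_asymm ht1)
        have hqp1 : (S.orderIsoOfFin hS).symm ⟨q, hqS⟩ < (S.orderIsoOfFin hS).symm ⟨p1, hp1S⟩ := by
          rcases lt_trichotomy ((S.orderIsoOfFin hS).symm ⟨q, hqS⟩)
            ((S.orderIsoOfFin hS).symm ⟨p1, hp1S⟩) with h | h | h
          · exact h
          · rw [h] at ht2; exact absurd ht2 (lt_irrefl _)
          · exact absurd (hincr _ hp1B _ hqB h) (lt_asymm ht2)
        have hv1 : p < q := (hidx_lt _ _ _ _).mp hpq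
        have hv2 : q < p1 := (hidx_lt _ _ _ _).mp hqp1
        have hv1' : p.val < q.val := hv1
        have hv2' : q.val < p1.val := hv2
        omega
    rcases lt_trichotomy (g a) (g a1) with h | h | h
    · exact h
    · exact absurd h hne_g
    · exact absurd (hord _ _ h _ (hgmem a1) _ (hgmem a)) (lt_asymm hylt)
  have hgmono : StrictMono g := strictMono_of_succ g hgsucc
  refine absurd (?_ : SInvolves ⟨kδ, δ⟩ ⟨m, σ⟩) (hσX ⟨kδ, δ⟩ hδD)
  refine ⟨g, hgmono, ?_⟩
  intro a b
  rcases eq_or_ne a b with rfl | hab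
  · exact iff_of_false (lt_irrefl _) (lt_irrefl _)
  · have h5 := hcmp5 (g a) (g b) (fun h => hab (hgmono.injective h))
      _ (hgmem a) _ (hgmem b)
    rw [hpat a b, h5]
    exact (hτlt _ _ _ _).symm


/-! #### assembly -/

lemma finite_small (N : ℕ) : {s : PermS | s.1 ≤ N}.Finite := by
  have hsub : {s : PermS | s.1 ≤ N} ⊆
      ⋃ i ∈ Finset.range (N + 1),
        Set.range (fun π : Equiv.Perm (Fin i) => (⟨i, π⟩ : PermS)) := by
    rintro ⟨n, π⟩ h
    simp only [Set.mem_iUnion, Finset.mem_range, Set.mem_range]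
    have hn : n ≤ N := h
    exact ⟨n, by omega, π, rfl⟩
  exact Set.Finite.subset (Set.Finite.biUnion (Finset.range (N + 1)).finite_toSet
    (fun i _ => Set.finite_range _)) hsub

lemma card_filter_succ_lt (kδ : ℕ) :
    ((Finset.univ : Finset (Fin kδ)).filter (fun a => a.val + 1 < kδ)).card = kδ - 1 := by
  cases kδ with
  | zero => simp
  | succ c =>
    have heq : ((Finset.univ : Finset (Fin (c+1))).filter (fun a => a.val + 1 < c + 1)) =
        Finset.univ.erase (Fin.last c) := by
      ext a
      simp only [Finset.mem_filter, Finset.mem_univ, true_and, Finset.mem_erase, and_true]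
      constructor
      · intro h h2
        rw [h2] at h
        simp [Fin.val_last] at h
      · intro h
        have : a.val < c + 1 := a.isLt
        have hne : a.val ≠ c := fun hv => h (Fin.ext (by rw [hv, Fin.val_last]))
        omega
    rw [heq, Finset.card_erase_of_mem (Finset.mem_univ _), Finset.card_univ, Fintype.card_fin]

lemma basis_bound (D : Set PermS) (d : ℕ) (hd : ∀ s ∈ D, s.1 ≤ d)
    (s : PermS) (hs : s ∈ PermBasis (WreathSet (Av D) Av21)) : s.1 ≤ d + (d - 1) * 3 := by
  obtain ⟨n, π⟩ := s
  obtain ⟨hnot, hmin⟩ := hs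
  show n ≤ d + (d - 1) * 3
  by_contra hbig
  push_neg at hbig
  have hn : 0 < n := by omega
  rcases key_alternative π hn D with hW | ⟨kδ, δ, hδ, y, hy, hpat, hbrk⟩
  · exact hnot hW
  have hkd : kδ ≤ d := hd _ hδ
  -- separator sets, one per marked point
  have hsep' : ∀ a : Fin kδ, ∃ T : Finset (Fin n),
      T.card ≤ (if a.val + 1 < kδ then 3 else 0) ∧
      ∀ hh : a.val + 1 < kδ, ∃ p p1 : Fin n, p ∈ T ∧ p1 ∈ T ∧ p1.val = p.val + 1 ∧
        y a ≤ p ∧ p1 ≤ y ⟨a.val + 1, hh⟩ ∧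
        (π p1 < π p ∨ ∃ q ∈ T, π p < π q ∧ π q < π p1) := by
    intro a
    by_cases hh : a.val + 1 < kδ
    · obtain ⟨p, hp1, hp2, hp3, hp4⟩ := hbrk a hh
      have hpn : p < n := by omega
      set pF : Fin n := ⟨p, hpn⟩ with hpFdef
      set pF1 : Fin n := ⟨p + 1, hp2⟩ with hpF1def
      have hvp : v π p = (π pF).val := v_lt π p hpn
      have hvp1 : v π (p + 1) = (π pF1).val := v_lt π (p + 1) hp2
      have hvne : v π (p + 1) ≠ v π p + 1 := hp4.2
      have hple : y a ≤ pF := (show (y a).val ≤ p from hp1)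
      have hp1le : pF1 ≤ y ⟨a.val + 1, hh⟩ := (show p + 1 ≤ (y ⟨a.val + 1, hh⟩).val from hp3)
      have hval : pF1.val = pF.val + 1 := rfl
      have hπne : (π pF1).val ≠ (π pF).val := fun hv => by
        have := π.injective (Fin.val_injective hv)
        rw [hpFdef, hpF1def] at this
        have := congrArg Fin.val this
        simp at this
      rcases lt_or_ge (π pF1).val (π pF).val with hdesc | hasc
      · refine ⟨{pF, pF1}, ?_, fun _ => ⟨pF, pF1, by simp, by simp, hval, hple, hp1le,
          Or.inl hdesc⟩⟩
        rw [if_pos hh]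
        have h1 := Finset.card_insert_le pF ({pF1} : Finset (Fin n))
        have h2 : ({pF1} : Finset (Fin n)).card = 1 := Finset.card_singleton _
        omega
      · have hgap : (π pF).val + 1 < (π pF1).val := by omega
        have hvn : (π pF).val + 1 < n := lt_trans hgap (π pF1).isLt
        set q : Fin n := π.symm ⟨(π pF).val + 1, hvn⟩ with hqdef
        have hq : (π q).val = (π pF).val + 1 := by
          rw [hqdef, Equiv.apply_symm_apply]
        refine ⟨{pF, pF1, q}, ?_, fun _ => ⟨pF, pF1, by simp, by simp, hval, hple, hp1le,
          Or.inr ⟨q, by simp, (show (π pF).val < (π q).val by omega),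
            (show (π q).val < (π pF1).val by omega)⟩⟩⟩
        rw [if_pos hh]
        have h1 := Finset.card_insert_le pF ({pF1, q} : Finset (Fin n))
        have h2 := Finset.card_insert_le pF1 ({q} : Finset (Fin n))
        have h3 : ({q} : Finset (Fin n)).card = 1 := Finset.card_singleton _
        omega
    · exact ⟨∅, by simp [hh], fun hh' => absurd hh' hh⟩
  choose seps hcard hsepP using hsep'
  set S : Finset (Fin n) := (Finset.image y Finset.univ) ∪ Finset.univ.biUnion seps with hSdef
  have hyS : ∀ a, y a ∈ S :=
    fun a => Finset.mem_union_left _ (Finset.mem_image_of_mem y (Finset.mem_univ a))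
  have hsepS : ∀ (a : Fin kδ) (x : Fin n), x ∈ seps a → x ∈ S :=
    fun a x hx => Finset.mem_union_right _ (Finset.mem_biUnion.mpr ⟨a, Finset.mem_univ a, hx⟩)
  have hcards : S.card ≤ kδ + 3 * (kδ - 1) := by
    have h1 : (Finset.image y Finset.univ).card ≤ kδ := by
      refine le_trans Finset.card_image_le ?_
      simp
    have h2 : (Finset.univ.biUnion seps).card ≤ ∑ a : Fin kδ, (seps a).card :=
      Finset.card_biUnion_le
    have h3 : ∑ a : Fin kδ, (seps a).card ≤
        ∑ a : Fin kδ, (if a.val + 1 < kδ then 3 else 0) :=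
      Finset.sum_le_sum (fun a _ => hcard a)
    have h4 : ∑ a : Fin kδ, (if a.val + 1 < kδ then 3 else 0) = 3 * (kδ - 1) := by
      rw [← Finset.sum_filter, Finset.sum_const, card_filter_succ_lt, smul_eq_mul, mul_comm]
    have h5 : S.card ≤ (Finset.image y Finset.univ).card + (Finset.univ.biUnion seps).card := by
      rw [hSdef]
      exact Finset.card_union_le _ _
    omega
  have hlt_n : S.card < n := by omega
  have htau := tau_not_in_wreath π S rfl D δ hδ y hy hyS hpat (fun a hh => by
    obtain ⟨p, p1, hpT, hp1T, h3, h4, h5, h6⟩ := hsepP a hh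
    refine ⟨p, p1, hsepS a p hpT, hsepS a p1 hp1T, h3, h4, h5, ?_⟩
    rcases h6 with h6 | ⟨q, hq, hq2, hq3⟩
    · exact Or.inl h6
    · exact Or.inr ⟨q, hsepS a q hq, hq2, hq3⟩)
  apply htau
  refine hmin ⟨S.card, patternOn π S rfl⟩ (patternOn_sinvolves π S rfl) ?_
  intro heq
  have hcc : S.card = n := congrArg Sigma.fst heq
  omega

end WreathAux

/-- there is an absolute constant `b` such that for every finitely
based class `X = Av(D)` whose basis elements have length at most `d`, the wreath
product `X ≀ Av(21)` is finitely based, with every basis element of length at most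
`d + (d-1)·b`. -/
theorem wreath_av21_finitely_based :
    ∃ b : ℕ, ∀ D : Set PermS, D.Finite → ∀ d : ℕ, (∀ s ∈ D, s.1 ≤ d) →
      (PermBasis (WreathSet (Av D) (Av {(⟨2, Equiv.swap 0 1⟩ : PermS)}))).Finite ∧
      ∀ s ∈ PermBasis (WreathSet (Av D) (Av {(⟨2, Equiv.swap 0 1⟩ : PermS)})),
        s.1 ≤ d + (d - 1) * b := by
  refine ⟨3, fun D _ d hd => ?_⟩
  have hb : ∀ s ∈ PermBasis (WreathSet (Av D) (Av {(⟨2, Equiv.swap 0 1⟩ : PermS)})),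
      s.1 ≤ d + (d - 1) * 3 := fun s hs => WreathAux.basis_bound D d hd s hs
  exact ⟨Set.Finite.subset (WreathAux.finite_small (d + (d - 1) * 3))
    (fun s hs => hb s hs), hb⟩
end
end

section
/- For each k ≥ 3, the permutation β_k = 2,5,1,3,7,4, 9,6,11,8,...,2k+3,2k, 2k+5,2k+4,2k+2 (of length 2k+5) contains exactly one occurrence of the pattern 321, namely the subsequence 2k+5, 2k+4, 2k+2. -/
/-- The value of the antichain element `β_k` at (0-indexed) position `j` (0-indexed values). -/
def betaVal (k j : ℕ) : ℕ :=
  if j = 0 then 1 else if j = 1 then 4 else if j = 2 then 0 else if j = 3 then 2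
  else if j = 4 then 6 else if j = 5 then 3
  else if j = 2*k+2 then 2*k+4 else if j = 2*k+3 then 2*k+3 else if j = 2*k+4 then 2*k+1
  else if j % 2 = 0 then j + 2 else j - 2

/-- `π` is the permutation `β_k = 2,5,1,3,7,4,9,6,11,8,…,2k+3,2k,2k+5,2k+4,2k+2`. -/
def IsBeta (k : ℕ) (π : Equiv.Perm (Fin (2*k+5))) : Prop :=
  ∀ j : Fin (2*k+5), (π j : ℕ) = betaVal k (j : ℕ)

set_option maxHeartbeats 2000000 in
lemma betaVal_spec (k j : ℕ) (hk : 3 ≤ k) :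
    (j = 0 → betaVal k j = 1) ∧ (j = 1 → betaVal k j = 4) ∧ (j = 2 → betaVal k j = 0) ∧
    (j = 3 → betaVal k j = 2) ∧ (j = 4 → betaVal k j = 6) ∧ (j = 5 → betaVal k j = 3) ∧
    (6 ≤ j → j ≤ 2*k+1 → j % 2 = 0 → betaVal k j = j + 2) ∧
    (6 ≤ j → j ≤ 2*k+1 → j % 2 = 1 → betaVal k j = j - 2) ∧
    (j = 2*k+2 → betaVal k j = 2*k+4) ∧ (j = 2*k+3 → betaVal k j = 2*k+3) ∧
    (j = 2*k+4 → betaVal k j = 2*k+1) := by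
  unfold betaVal
  split_ifs <;> omega

lemma betaVal_ub (k p : ℕ) (hk : 3 ≤ k) (hp : p ≤ 2*k+4) :
    (p = 1 ∧ betaVal k p = 4) ∨ betaVal k p ≤ p + 2 := by
  have := betaVal_spec k p hk; omega

lemma betaVal_lb (k r : ℕ) (hk : 3 ≤ k) (hr : r ≤ 2*k+4) :
    r ≤ betaVal k r + 2 ∨ (r = 2*k+4 ∧ betaVal k r = 2*k+1) := by
  have := betaVal_spec k r hk; omega

set_option maxHeartbeats 1000000

/-- for `k ≥ 3`, the permutation `β_k` contains exactly one occurrence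
of the pattern `321`, namely the subsequence `2k+5, 2k+4, 2k+2` (at the last three
positions). -/

theorem beta_unique_321 (k : ℕ) (hk : 3 ≤ k) (π : Equiv.Perm (Fin (2*k+5)))
    (hπ : IsBeta k π) :
    (∀ p q r : Fin (2*k+5), p < q → q < r → π q < π p → π r < π q →
      (p : ℕ) = 2*k+2 ∧ (q : ℕ) = 2*k+3 ∧ (r : ℕ) = 2*k+4) ∧
    (∃ p q r : Fin (2*k+5), (p : ℕ) = 2*k+2 ∧ (q : ℕ) = 2*k+3 ∧ (r : ℕ) = 2*k+4 ∧
      p < q ∧ q < r ∧ π q < π p ∧ π r < π q) := by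
  constructor
  · intro p q r hpq hqr h1 h2
    have hp := hπ p; have hq := hπ q; have hr := hπ r
    have hpb := p.isLt; have hqb := q.isLt; have hrb := r.isLt
    have sq := betaVal_spec k (q : ℕ) hk
    have up := betaVal_ub k (p : ℕ) hk (by omega)
    have lr := betaVal_lb k (r : ℕ) hk (by omega)
    rw [Fin.lt_def] at hpq hqr h1 h2
    omega
  · refine ⟨⟨2*k+2, by omega⟩, ⟨2*k+3, by omega⟩, ⟨2*k+4, by omega⟩, rfl, rfl, rfl, ?_, ?_, ?_, ?_⟩
    · exact Fin.mk_lt_mk.mpr (by omega)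
    · exact Fin.mk_lt_mk.mpr (by omega)
    · have h1 := hπ ⟨2*k+2, by omega⟩
      have h2 := hπ ⟨2*k+3, by omega⟩
      have s1 : betaVal k (2*k+2) = 2*k+4 := by have := betaVal_spec k (2*k+2) hk; omega
      have s2 : betaVal k (2*k+3) = 2*k+3 := by have := betaVal_spec k (2*k+3) hk; omega
      rw [Fin.lt_def]
      simp only [Fin.val_mk] at *
      omega
    · have h1 := hπ ⟨2*k+3, by omega⟩
      have h2 := hπ ⟨2*k+4, by omega⟩
      have s1 : betaVal k (2*k+3) = 2*k+3 := by have := betaVal_spec k (2*k+3) hk; omega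
      have s2 : betaVal k (2*k+4) = 2*k+1 := by have := betaVal_spec k (2*k+4) hk; omega
      rw [Fin.lt_def]
      simp only [Fin.val_mk] at *
      omega
end
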